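/- arXiv:1410.7032 — 6 statements merged into one kernel-verified Lean document; each statement's English description precedes it below -/
import Mathlib

section
/- Let G_2 ⊆ {1,...,N}×{1,...,N} and let p : G_2 → (0,1) with p̲ := min over G_2 of p and p̄ := max over G_2 of p, where p̄ < 1. For a finite admissible word σ = (σ_1,...,σ_k) (meaning each consecutive pair lies in G_2) let p_σ := p_{σ_1σ_2}⋯p_{σ_{k-1}σ_k}, and let Λ_j := {σ : p_{σ^-} ≥ p̲^j > p_σ}, where σ^- drops the last letter. Let k_{1j} := min_{σ∈Λ_j} |σ| and k_{2j} := max_{σ∈Λ_j} |σ|. Then with N_1 := min{h ≥ 1 : p̄^h < p̲}, for every j ≥ 1 one has j ≤ k_{1j} ≤ k_{2j} ≤ 3N_1 j. -/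
open Finset

/-- Product of transition weights along a word (list of letters);
for words of length ≤ 1 this is `1`. -/
def pword {N : ℕ} (p : Fin N → Fin N → ℝ) (l : List (Fin N)) : ℝ :=
  ((l.zip l.tail).map fun ab => p ab.1 ab.2).prod

/-- A finite admissible word: nonempty and every consecutive pair lies in `G2`. -/
def admissibleG {N : ℕ} (G2 : Finset (Fin N × Fin N)) (l : List (Fin N)) : Prop :=
  l ≠ [] ∧ l.Chain' fun a b => (a, b) ∈ G2

lemma zip_pairs_mem {α : Type*} (R : α → α → Prop) :
    ∀ l : List α, l.Chain' R → ∀ x ∈ l.zip l.tail, R x.1 x.2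
  | [], _, x, hx => by simp at hx
  | [a], _, x, hx => by simp at hx
  | a :: b :: t, h, x, hx => by
      simp only [List.Chain', List.isChain_cons_cons] at h
      simp only [List.tail_cons, List.zip_cons_cons, List.mem_cons] at hx
      rcases hx with rfl | hx
      · exact h.1
      · exact zip_pairs_mem R (b :: t) h.2 x hx

lemma prod_mem_bounds (a b : ℝ) (ha : 0 ≤ a) :
    ∀ L : List ℝ, (∀ x ∈ L, a ≤ x ∧ x ≤ b) →
      a ^ L.length ≤ L.prod ∧ L.prod ≤ b ^ L.length
  | [], _ => by simp
  | x :: L, h => by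
      have hx := h x List.mem_cons_self
      have ih := prod_mem_bounds a b ha L (fun y hy => h y (List.mem_cons_of_mem _ hy))
      have hL0 : 0 ≤ L.prod := le_trans (pow_nonneg ha _) ih.1
      have hb : 0 ≤ b := le_trans (le_trans ha hx.1) hx.2
      simp only [List.prod_cons, List.length_cons, pow_succ]
      constructor
      · calc a ^ L.length * a = a * a ^ L.length := mul_comm _ _
          _ ≤ x * L.prod := mul_le_mul hx.1 ih.1 (pow_nonneg ha _) (le_trans ha hx.1)
      · calc x * L.prod ≤ b * b ^ L.length := mul_le_mul hx.2 ih.2 hL0 hb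
          _ = b ^ L.length * b := mul_comm _ _

lemma pword_bounds {N : ℕ} (G2 : Finset (Fin N × Fin N)) (hG2 : G2.Nonempty)
    (p : Fin N → Fin N → ℝ) (pmin pmax : ℝ)
    (hpmin : pmin = G2.inf' hG2 fun ij => p ij.1 ij.2)
    (hpmax : pmax = G2.sup' hG2 fun ij => p ij.1 ij.2)
    (hmin0 : 0 ≤ pmin)
    (l : List (Fin N)) (hc : l.Chain' fun a b => (a, b) ∈ G2) :
    pmin ^ (l.length - 1) ≤ pword p l ∧ pword p l ≤ pmax ^ (l.length - 1) := by
  have hlen : ((l.zip l.tail).map fun ab => p ab.1 ab.2).length = l.length - 1 := by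
    simp [List.length_zip, min_eq_right (Nat.sub_le _ _)]
  have hb := prod_mem_bounds pmin pmax hmin0
    ((l.zip l.tail).map fun ab => p ab.1 ab.2) ?_
  · rw [hlen] at hb; exact hb
  · intro x hx
    simp only [List.mem_map] at hx
    obtain ⟨ab, hab, rfl⟩ := hx
    have hmem : (ab.1, ab.2) ∈ G2 := zip_pairs_mem _ l hc ab hab
    constructor
    · rw [hpmin]; exact Finset.inf'_le _ hmem
    · rw [hpmax]; exact Finset.le_sup' (fun ij => p ij.1 ij.2) hmem

theorem stmt0 {N : ℕ} (G2 : Finset (Fin N × Fin N)) (hG2 : G2.Nonempty)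
    (p : Fin N → Fin N → ℝ)
    (hp : ∀ ij ∈ G2, 0 < p ij.1 ij.2 ∧ p ij.1 ij.2 < 1)
    (pmin pmax : ℝ)
    (hpmin : pmin = G2.inf' hG2 fun ij => p ij.1 ij.2)
    (hpmax : pmax = G2.sup' hG2 fun ij => p ij.1 ij.2)
    (Λ : ℕ → Set (List (Fin N)))
    (hΛ : ∀ j, Λ j = {l | admissibleG G2 l ∧
      pmin ^ j ≤ pword p l.dropLast ∧ pword p l < pmin ^ j})
    (N1 : ℕ) (hN1 : N1 = sInf {h : ℕ | 1 ≤ h ∧ pmax ^ h < pmin})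
    (j : ℕ) (hj : 1 ≤ j) (hne : (Λ j).Nonempty) :
    j ≤ sInf (List.length '' Λ j) ∧
      sInf (List.length '' Λ j) ≤ sSup (List.length '' Λ j) ∧
      sSup (List.length '' Λ j) ≤ 3 * N1 * j := by
  -- basic facts about pmin, pmax
  obtain ⟨a, ha, hae⟩ := Finset.exists_mem_eq_inf' hG2 fun ij => p ij.1 ij.2
  obtain ⟨b, hb, hbe⟩ := Finset.exists_mem_eq_sup' hG2 fun ij => p ij.1 ij.2
  have hmin0 : 0 < pmin := by rw [hpmin, hae]; exact (hp a ha).1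
  have hmin1 : pmin < 1 := by rw [hpmin, hae]; exact (hp a ha).2
  have hmax0 : 0 < pmax := by rw [hpmax, hbe]; exact (hp b hb).1
  have hmax1 : pmax < 1 := by rw [hpmax, hbe]; exact (hp b hb).2
  -- N1 belongs to the defining set
  have hN1mem : 1 ≤ N1 ∧ pmax ^ N1 < pmin := by
    have hnonempty : {h : ℕ | 1 ≤ h ∧ pmax ^ h < pmin}.Nonempty := by
      obtain ⟨n, hn⟩ := exists_pow_lt_of_lt_one hmin0 hmax1
      refine ⟨n, ?_, hn⟩
      rcases Nat.eq_zero_or_pos n with rfl | h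
      · simp at hn; linarith
      · exact h
    rw [hN1]; exact Nat.sInf_mem hnonempty
  have hN1j : 1 ≤ N1 * j := Nat.one_le_iff_ne_zero.mpr
    (Nat.mul_ne_zero (Nat.one_le_iff_ne_zero.mp hN1mem.1) (Nat.one_le_iff_ne_zero.mp hj))
  -- pointwise bounds for every element of Λ j
  have key : ∀ l ∈ Λ j, j ≤ l.length ∧ l.length ≤ 3 * N1 * j := by
    intro l hl
    rw [hΛ j] at hl
    obtain ⟨⟨hne', hc⟩, h1, h2⟩ := hl
    have hbl := pword_bounds G2 hG2 p pmin pmax hpmin hpmax hmin0.le l hc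
    have hcd : l.dropLast.Chain' fun a b => (a, b) ∈ G2 :=
      hc.prefix l.dropLast_prefix
    have hbd := pword_bounds G2 hG2 p pmin pmax hpmin hpmax hmin0.le l.dropLast hcd
    -- lower bound: pmin^(len-1) ≤ pword l < pmin^j ⇒ j < len - 1
    have hlow : j < l.length - 1 := by
      have : pmin ^ (l.length - 1) < pmin ^ j := lt_of_le_of_lt hbl.1 h2
      exact (pow_lt_pow_iff_right_of_lt_one₀ hmin0 hmin1).mp this
    -- upper bound
    have hupper : l.length - 2 < N1 * j := by
      have hd : pmin ^ j ≤ pmax ^ (l.dropLast.length - 1) := le_trans h1 hbd.2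
      have hdl : l.dropLast.length - 1 = l.length - 2 := by
        rw [List.length_dropLast]; omega
      rw [hdl] at hd
      have hstep : pmax ^ (N1 * j) < pmin ^ j := by
        have : (pmax ^ N1) ^ j < pmin ^ j :=
          pow_lt_pow_left₀ hN1mem.2 (pow_nonneg hmax0.le _) (Nat.one_le_iff_ne_zero.mp hj)
        rwa [← pow_mul] at this
      have : pmax ^ (N1 * j) < pmax ^ (l.length - 2) := lt_of_lt_of_le hstep hd
      exact (pow_lt_pow_iff_right_of_lt_one₀ hmax0 hmax1).mp this
    have h3 : 3 * N1 * j = 3 * (N1 * j) := by ring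
    set m := N1 * j with hm
    rw [h3]
    omega
  -- conclude about sInf and sSup
  have hSne : (List.length '' Λ j).Nonempty := hne.image _
  have hbdd : BddAbove (List.length '' Λ j) := by
    refine ⟨3 * N1 * j, ?_⟩
    rintro n ⟨l, hl, rfl⟩
    exact (key l hl).2
  refine ⟨?_, ?_, ?_⟩
  · apply le_csInf hSne
    rintro n ⟨l, hl, rfl⟩
    exact (key l hl).1
  · exact csInf_le_csSup hSne (OrderBot.bddBelow _) hbdd
  · apply csSup_le hSne
    rintro n ⟨l, hl, rfl⟩
    exact (key l hl).2
end

section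
/- With the same setup (transition weights p_{ij} ∈ (0,1) on G_2, words σ, p_σ, the sets Λ_j, and ψ_j := card(Λ_j)), assume every letter i ∈ {1,...,N} has at least two admissible successors. Then there is a constant N_2 > 0 (one may take N_2 = N^{N_1+1} with N_1 := min{h ≥ 1 : p̄^h < p̲}) such that ψ_j ≤ ψ_{j+1} ≤ N_2 ψ_j for all j ≥ 1. -/
open Finset

namespace Stmt1Aux

variable {N : ℕ} (p : Fin N → Fin N → ℝ)

@[simp] lemma pword_nil : pword p [] = 1 := rfl
@[simp] lemma pword_single (a : Fin N) : pword p [a] = 1 := rfl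
lemma pword_cons_cons (a b : Fin N) (l : List (Fin N)) :
    pword p (a :: b :: l) = p a b * pword p (b :: l) := by
  simp [pword]

lemma pword_concat (l : List (Fin N)) (hl : l ≠ []) (a : Fin N) :
    pword p (l ++ [a]) = pword p l * p (l.getLast hl) a := by
  induction l with
  | nil => simp at hl
  | cons x t ih =>
    cases t with
    | nil => simp [pword_cons_cons]
    | cons y s =>
      have h := ih (by simp)
      simp only [List.cons_append] at h ⊢
      rw [pword_cons_cons, h, pword_cons_cons, mul_assoc]
      congr 2

variable {G2 : Finset (Fin N × Fin N)} {pmin pmax : ℝ}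
  (hlb : ∀ a b : Fin N, (a, b) ∈ G2 → pmin ≤ p a b)
  (hub : ∀ a b : Fin N, (a, b) ∈ G2 → p a b ≤ pmax)
  (h0 : 0 < pmin) (hmaxpos : 0 < pmax)

section
include hlb h0

lemma pword_pos {l : List (Fin N)} (hl : l.Chain' fun a b => (a, b) ∈ G2) :
    0 < pword p l := by
  induction l with
  | nil => norm_num
  | cons x t ih =>
    cases t with
    | nil => norm_num
    | cons y s =>
      rw [pword_cons_cons]
      have h1 : (x, y) ∈ G2 := (List.isChain_cons_cons.mp hl).1
      exact mul_pos (lt_of_lt_of_le h0 (hlb _ _ h1)) (ih (List.isChain_cons_cons.mp hl).2)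

lemma pword_ge {l : List (Fin N)} (hl : l.Chain' fun a b => (a, b) ∈ G2) :
    pmin ^ (l.length - 1) ≤ pword p l := by
  induction l with
  | nil => norm_num
  | cons x t ih =>
    cases t with
    | nil => norm_num
    | cons y s =>
      rw [pword_cons_cons]
      have h1 : (x, y) ∈ G2 := (List.isChain_cons_cons.mp hl).1
      have h2 := ih (List.isChain_cons_cons.mp hl).2
      calc pmin ^ ((x :: y :: s).length - 1) = pmin * pmin ^ ((y :: s).length - 1) := by
            simp [pow_succ, mul_comm]
        _ ≤ p x y * pword p (y :: s) :=
            mul_le_mul (hlb _ _ h1) h2 (by positivity) ((h0.le.trans (hlb _ _ h1)).trans' le_rfl)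

end

section
include hlb h0 hub hmaxpos

lemma pword_le {l : List (Fin N)} (hl : l.Chain' fun a b => (a, b) ∈ G2) :
    pword p l ≤ pmax ^ (l.length - 1) := by
  induction l with
  | nil => norm_num
  | cons x t ih =>
    cases t with
    | nil => norm_num
    | cons y s =>
      rw [pword_cons_cons]
      have h1 : (x, y) ∈ G2 := (List.isChain_cons_cons.mp hl).1
      have h2 := ih (List.isChain_cons_cons.mp hl).2
      have hpos : (0:ℝ) ≤ pword p (y :: s) :=
        (pword_pos p hlb h0 (List.isChain_cons_cons.mp hl).2).le
      calc p x y * pword p (y :: s) ≤ pmax * pmax ^ ((y :: s).length - 1) :=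
            mul_le_mul (hub _ _ h1) h2 hpos hmaxpos.le
        _ = pmax ^ ((x :: y :: s).length - 1) := by simp [pow_succ, mul_comm]

end

lemma chain'_concat {l : List (Fin N)} (hne : l ≠ []) {a : Fin N}
    (hl : l.Chain' fun a b => (a, b) ∈ G2) (ha : (l.getLast hne, a) ∈ G2) :
    (l ++ [a]).Chain' fun a b => (a, b) ∈ G2 := by
  rw [List.Chain', List.isChain_append]
  refine ⟨hl, List.isChain_singleton _, ?_⟩
  intro x hx y hy
  rw [List.getLast?_eq_getLast (l := l) hne, Option.mem_some_iff] at hx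
  simp only [List.head?_cons, Option.mem_some_iff] at hy
  subst hx; subst hy; exact ha

lemma edge_of_chain'_concat {l : List (Fin N)} (hne : l ≠ []) {a : Fin N}
    (hl : (l ++ [a]).Chain' fun a b => (a, b) ∈ G2) :
    (l.getLast hne, a) ∈ G2 := by
  rw [List.Chain', List.isChain_append] at hl
  exact hl.2.2 _ (by rw [List.getLast?_eq_getLast (l := l) hne]; rfl) a rfl

include hlb hub h0 hmaxpos in
lemma pword_append_le (σ m : List (Fin N)) (hσ : σ ≠ [])
    (hρ : (σ ++ m).Chain' fun a b => (a, b) ∈ G2) :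
    pword p (σ ++ m) ≤ pword p σ * pmax ^ m.length := by
  induction m using List.reverseRecOn with
  | nil => simp
  | append_singleton t a ih =>
    have hne : σ ++ t ≠ [] := by simp [hσ]
    have hpre : (σ ++ t) <+: (σ ++ (t ++ [a])) := ⟨[a], by simp⟩
    have hchain : (σ ++ t).Chain' fun a b => (a, b) ∈ G2 := hρ.prefix hpre
    rw [← List.append_assoc] at hρ ⊢
    rw [pword_concat _ _ hne]
    have hedge : ((σ ++ t).getLast hne, a) ∈ G2 := edge_of_chain'_concat hne hρ
    have h1 : pword p (σ ++ t) ≤ pword p σ * pmax ^ t.length := ih hchain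
    have h2 : p ((σ ++ t).getLast hne) a ≤ pmax := hub _ _ hedge
    have h3 : (0:ℝ) ≤ p ((σ ++ t).getLast hne) a := h0.le.trans (hlb _ _ hedge)
    have h4 : (0:ℝ) ≤ pword p σ * pmax ^ t.length := by
      have := pword_pos p hlb h0 (hρ.prefix (show σ <+: σ ++ t ++ [a] from ⟨t ++ [a], by simp⟩))
      positivity
    calc pword p (σ ++ t) * p ((σ ++ t).getLast hne) a
        ≤ (pword p σ * pmax ^ t.length) * pmax := mul_le_mul h1 h2 h3 h4
      _ = pword p σ * pmax ^ (t ++ [a]).length := by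
          simp [pow_succ, mul_assoc]

def enc : ∀ _ : List (Fin N), ℕ
  | [] => 0
  | a :: s => enc s * N + a.val + 1

lemma enc_injective : Function.Injective (enc (N := N)) := by
  intro s t h
  induction s generalizing t with
  | nil =>
    cases t with
    | nil => rfl
    | cons b t => simp only [enc] at h; omega
  | cons a s ih =>
    cases t with
    | nil => simp only [enc] at h; omega
    | cons b t =>
      simp only [enc] at h
      have ha : a.val < N := a.isLt
      have hb : b.val < N := b.isLt
      have hst : enc s = enc t := by
        rcases Nat.lt_trichotomy (enc s) (enc t) with hlt | he | hgt
        · have key : (enc s + 1) * N ≤ enc t * N := Nat.mul_le_mul_right N hlt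
          have : enc s * N + N ≤ enc t * N := by linarith
          linarith
        · exact he
        · have key : (enc t + 1) * N ≤ enc s * N := Nat.mul_le_mul_right N hgt
          have : enc t * N + N ≤ enc s * N := by linarith
          linarith
      have hab : a = b := by
        apply Fin.ext
        rw [hst] at h
        omega
      subst hab
      rw [ih hst]

lemma enc_bound (hN : 2 ≤ N) (s : List (Fin N)) :
    enc s * (N - 1) + N ≤ N ^ (s.length + 1) := by
  obtain ⟨M, rfl⟩ : ∃ M, N = M + 2 := ⟨N - 2, by omega⟩
  induction s with
  | nil => simp [enc]
  | cons a s ih =>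
    have ha : a.val + 1 ≤ M + 2 := a.isLt
    simp only [enc, List.length_cons]
    have h2 : (M+2) ^ (s.length + 1 + 1) = (M+2) ^ (s.length + 1) * (M+2) := by ring
    have hsub : M + 2 - 1 = M + 1 := by omega
    rw [hsub] at ih ⊢
    rw [h2]
    nlinarith [ih, Nat.mul_le_mul_right (M+2) ih]

lemma enc_lt (hN : 2 ≤ N) (s : List (Fin N)) : enc s < N ^ (s.length + 1) := by
  have h := enc_bound hN s
  have h1 : enc s ≤ enc s * (N - 1) := Nat.le_mul_of_pos_right _ (by omega)
  omega

end Stmt1Aux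

open Stmt1Aux

theorem stmt1 {N : ℕ} (G2 : Finset (Fin N × Fin N)) (hG2 : G2.Nonempty)
    (p : Fin N → Fin N → ℝ)
    (hp : ∀ ij ∈ G2, 0 < p ij.1 ij.2 ∧ p ij.1 ij.2 < 1)
    (hsucc : ∀ i : Fin N, 2 ≤ (G2.filter fun ij => ij.1 = i).card)
    (pmin pmax : ℝ)
    (hpmin : pmin = G2.inf' hG2 fun ij => p ij.1 ij.2)
    (hpmax : pmax = G2.sup' hG2 fun ij => p ij.1 ij.2)
    (Λ : ℕ → Set (List (Fin N)))
    (hΛ : ∀ j, Λ j = {l | admissibleG G2 l ∧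
      pmin ^ j ≤ pword p l.dropLast ∧ pword p l < pmin ^ j})
    (ψ : ℕ → ℕ) (hψ : ∀ j, ψ j = (Λ j).ncard)
    (N1 : ℕ) (hN1 : N1 = sInf {h : ℕ | 1 ≤ h ∧ pmax ^ h < pmin}) :
    ∃ N2 : ℕ, 0 < N2 ∧ N2 = N ^ (N1 + 1) ∧
      ∀ j, 1 ≤ j → ψ j ≤ ψ (j + 1) ∧ ψ (j + 1) ≤ N2 * ψ j := by
  classical
  obtain ⟨ij0, hij0⟩ := hG2
  have hNpos : 0 < N := ij0.1.pos
  have hlb : ∀ a b : Fin N, (a, b) ∈ G2 → pmin ≤ p a b := by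
    intro a b h; rw [hpmin]; exact Finset.inf'_le (fun ij => p ij.1 ij.2) h
  have hub : ∀ a b : Fin N, (a, b) ∈ G2 → p a b ≤ pmax := by
    intro a b h; rw [hpmax]; exact Finset.le_sup' (fun ij => p ij.1 ij.2) h
  have hminpos : 0 < pmin := by
    rw [hpmin]; exact (Finset.lt_inf'_iff _).mpr fun ij hij => (hp ij hij).1
  have hmaxlt1 : pmax < 1 := by
    rw [hpmax]; exact (Finset.sup'_lt_iff _).mpr fun ij hij => (hp ij hij).2
  have hminmax : pmin ≤ pmax := by
    refine le_trans (hlb ij0.1 ij0.2 (by simpa using hij0)) (hub ij0.1 ij0.2 (by simpa using hij0))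
  have hminlt1 : pmin < 1 := lt_of_le_of_lt hminmax hmaxlt1
  have hmaxpos : 0 < pmax := lt_of_lt_of_le hminpos hminmax
  have hsucc' : ∀ i : Fin N, ∃ a : Fin N, (i, a) ∈ G2 := by
    intro i
    have h2 : 0 < (G2.filter fun ij => ij.1 = i).card := lt_of_lt_of_le (by norm_num) (hsucc i)
    obtain ⟨ij, hij⟩ := Finset.card_pos.mp h2
    rw [Finset.mem_filter] at hij
    exact ⟨ij.2, by rw [← hij.2]; simpa using hij.1⟩
  have hN2 : 2 ≤ N := by
    have hcard := hsucc ⟨0, hNpos⟩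
    have hle : (G2.filter fun ij => ij.1 = (⟨0, hNpos⟩ : Fin N)).card ≤ (Finset.univ : Finset (Fin N)).card := by
      apply Finset.card_le_card_of_injOn Prod.snd (fun a _ => Finset.mem_univ _)
      intro x hx y hy hxy
      simp only [Finset.coe_filter, Set.mem_setOf_eq] at hx hy
      exact Prod.ext (hx.2.trans hy.2.symm) hxy
    rw [Finset.card_univ, Fintype.card_fin] at hle
    omega
  have hSne : {h : ℕ | 1 ≤ h ∧ pmax ^ h < pmin}.Nonempty := by
    obtain ⟨n, hn⟩ := exists_pow_lt_of_lt_one hminpos hmaxlt1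
    refine ⟨n, ?_, hn⟩
    rcases Nat.eq_zero_or_pos n with rfl | h
    · rw [pow_zero] at hn; linarith
    · exact h
  have hN1mem : N1 ∈ {h : ℕ | 1 ≤ h ∧ pmax ^ h < pmin} := by
    rw [hN1]; exact Nat.sInf_mem hSne
  have hN1pos : 1 ≤ N1 := hN1mem.1
  have hN1lt : pmax ^ N1 < pmin := hN1mem.2
  have htN1 : ∀ t : ℕ, pmin ≤ pmax ^ t → t < N1 := by
    intro t ht
    by_contra hcon
    push_neg at hcon
    have : pmax ^ t ≤ pmax ^ N1 := pow_le_pow_of_le_one hmaxpos.le hmaxlt1.le hcon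
    linarith
  have hmem : ∀ (j : ℕ) (l : List (Fin N)), l ∈ Λ j ↔ (admissibleG G2 l ∧
      pmin ^ j ≤ pword p l.dropLast ∧ pword p l < pmin ^ j) := by
    intro j l; rw [hΛ j]; rfl
  -- antichain property
  have hanti : ∀ j : ℕ, ∀ σ1 ∈ Λ j, ∀ σ2 ∈ Λ j, σ1 <+: σ2 → σ1 = σ2 := by
    intro j σ1 h1 σ2 h2 hpre
    rw [hmem] at h1 h2
    by_contra hne
    have hlt : σ1.length < σ2.length :=
      lt_of_le_of_ne hpre.length_le (fun h => hne (hpre.eq_of_length h))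
    have hpre' : σ1 <+: σ2.dropLast := by
      apply List.prefix_of_prefix_length_le hpre (List.dropLast_prefix σ2)
      rw [List.length_dropLast]; omega
    obtain ⟨m, hm⟩ := hpre'
    have hchain : (σ1 ++ m).Chain' fun a b => (a, b) ∈ G2 := by
      rw [hm]; exact h2.1.2.prefix (List.dropLast_prefix σ2)
    have hb : pword p (σ1 ++ m) ≤ pword p σ1 * pmax ^ m.length :=
      pword_append_le p hlb hub hminpos hmaxpos σ1 m h1.1.1 hchain
    have hp0 : 0 < pword p σ1 := pword_pos p hlb hminpos h1.1.2
    have hpow1 : pmax ^ m.length ≤ 1 := pow_le_one₀ hmaxpos.le hmaxlt1.le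
    have : pmin ^ j ≤ pword p σ1 := by
      calc pmin ^ j ≤ pword p σ2.dropLast := h2.2.1
        _ = pword p (σ1 ++ m) := by rw [hm]
        _ ≤ pword p σ1 * pmax ^ m.length := hb
        _ ≤ pword p σ1 * 1 := by nlinarith
        _ = pword p σ1 := mul_one _
    linarith [h1.2.2]
  -- crossing lemma
  have hcross : ∀ (j n : ℕ) (τ : List (Fin N)), τ.length ≤ n → admissibleG G2 τ →
      pword p τ < pmin ^ j → ∃ σ, σ <+: τ ∧ σ ∈ Λ j := by
    intro j n
    induction n with
    | zero =>
      intro τ hlen hτ _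
      exact absurd (List.length_eq_zero_iff.mp (Nat.le_zero.mp hlen)) hτ.1
    | succ n ih =>
      intro τ hlen hτ hlt
      by_cases hc : pmin ^ j ≤ pword p τ.dropLast
      · exact ⟨τ, List.prefix_refl τ, (hmem _ _).mpr ⟨hτ, hc, hlt⟩⟩
      · push_neg at hc
        have hne : τ.dropLast ≠ [] := by
          intro h
          rw [h, pword_nil] at hc
          have : pmin ^ j ≤ 1 := pow_le_one₀ hminpos.le hminlt1.le
          linarith
        have hlen' : τ.dropLast.length ≤ n := by
          rw [List.length_dropLast]
          have : τ.length ≠ 0 := fun h => hτ.1 (List.length_eq_zero_iff.mp h)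
          omega
        obtain ⟨σ, hq1, hq2⟩ := ih τ.dropLast hlen'
          ⟨hne, hτ.2.prefix (List.dropLast_prefix τ)⟩ hc
        exact ⟨σ, hq1.trans (List.dropLast_prefix τ), hq2⟩
  -- extension lemma
  have hext : ∀ (j n : ℕ) (σ : List (Fin N)), admissibleG G2 σ →
      pmin ^ (j+1) ≤ pword p σ.dropLast → pword p σ * pmax ^ n < pmin ^ (j+1) →
      ∃ τ, σ <+: τ ∧ τ ∈ Λ (j+1) := by
    intro j n
    induction n with
    | zero =>
      intro σ hσ hd hlt
      rw [pow_zero, mul_one] at hlt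
      exact ⟨σ, List.prefix_refl σ, (hmem _ _).mpr ⟨hσ, hd, hlt⟩⟩
    | succ n ih =>
      intro σ hσ hd hlt
      by_cases hc : pword p σ < pmin ^ (j+1)
      · exact ⟨σ, List.prefix_refl σ, (hmem _ _).mpr ⟨hσ, hd, hc⟩⟩
      · push_neg at hc
        obtain ⟨a, ha⟩ := hsucc' (σ.getLast hσ.1)
        have hσ' : admissibleG G2 (σ ++ [a]) := ⟨by simp, chain'_concat hσ.1 hσ.2 ha⟩
        have hd' : pmin ^ (j+1) ≤ pword p (σ ++ [a]).dropLast := by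
          rw [List.dropLast_concat]
          exact hc
        have hlt' : pword p (σ ++ [a]) * pmax ^ n < pmin ^ (j+1) := by
          rw [pword_concat p σ hσ.1 a]
          have h2 : p (σ.getLast hσ.1) a ≤ pmax := hub _ _ ha
          have hp0 : 0 < pword p σ := pword_pos p hlb hminpos hσ.2
          have hpownn : (0:ℝ) ≤ pmax ^ n := by positivity
          calc pword p σ * p (σ.getLast hσ.1) a * pmax ^ n
              ≤ pword p σ * pmax * pmax ^ n := by
                apply mul_le_mul_of_nonneg_right _ hpownn
                exact mul_le_mul_of_nonneg_left h2 hp0.le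
            _ = pword p σ * pmax ^ (n+1) := by ring
            _ < pmin ^ (j+1) := hlt
        obtain ⟨τ, ht1, ht2⟩ := ih (σ ++ [a]) hσ' hd' hlt'
        exact ⟨τ, (show σ <+: σ ++ [a] from ⟨[a], rfl⟩).trans ht1, ht2⟩
  -- finiteness
  have hfin : ∀ j : ℕ, (Λ j).Finite := by
    intro j
    apply Set.Finite.subset (List.finite_length_le (Fin N) (N1 * j + 2))
    intro l hl
    rw [hmem] at hl
    simp only [Set.mem_setOf_eq]
    by_contra hlen
    push_neg at hlen
    have hlne : l ≠ [] := hl.1.1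
    have hllen : 1 ≤ l.length := by
      rcases Nat.eq_zero_or_pos l.length with h | h
      · exact absurd (List.length_eq_zero_iff.mp h) hlne
      · exact h
    have hchain : l.dropLast.Chain' fun a b => (a, b) ∈ G2 :=
      hl.1.2.prefix (List.dropLast_prefix l)
    have h1 : pword p l.dropLast ≤ pmax ^ (l.dropLast.length - 1) :=
      pword_le p hlb hub hminpos hmaxpos hchain
    have h2 : pmax ^ (N1 * j) ≤ pmin ^ j := by
      calc pmax ^ (N1 * j) = (pmax ^ N1) ^ j := by rw [← pow_mul]
        _ ≤ pmin ^ j := pow_le_pow_left₀ (by positivity) hN1lt.le j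
    have h3 : pmax ^ (N1 * j) ≤ pmax ^ (l.dropLast.length - 1) :=
      le_trans h2 (le_trans hl.2.1 h1)
    have h4 : l.dropLast.length - 1 ≤ N1 * j := by
      by_contra hh
      push_neg at hh
      have := (pow_lt_pow_iff_right_of_lt_one₀ hmaxpos hmaxlt1).mpr hh
      linarith
    rw [List.length_dropLast] at h4
    omega
  refine ⟨N ^ (N1 + 1), pow_pos hNpos _, rfl, ?_⟩
  intro j _
  constructor
  · -- monotone
    have hexists : ∀ σ ∈ Λ j, ∃ τ, σ <+: τ ∧ τ ∈ Λ (j+1) := by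
      intro σ hσ
      have hσ' := (hmem _ _).mp hσ
      have hp0 : 0 < pword p σ := pword_pos p hlb hminpos hσ'.1.2
      obtain ⟨n, hn⟩ := exists_pow_lt_of_lt_one
        (div_pos (pow_pos hminpos (j+1)) hp0) hmaxlt1
      have hlt : pword p σ * pmax ^ n < pmin ^ (j+1) := by
        rw [lt_div_iff₀ hp0] at hn
        linarith [hn]
      have hd : pmin ^ (j+1) ≤ pword p σ.dropLast :=
        le_trans (pow_le_pow_of_le_one hminpos.le hminlt1.le (Nat.le_succ j)) hσ'.2.1
      exact hext j n σ hσ'.1 hd hlt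
    choose F hF1 hF2 using hexists
    set g : List (Fin N) → List (Fin N) :=
      fun σ => if h : σ ∈ Λ j then F σ h else [] with hg
    have hmaps : ∀ σ ∈ Λ j, g σ ∈ Λ (j+1) := by
      intro σ hσ; rw [hg]; simp only [dif_pos hσ]; exact hF2 σ hσ
    have hinj : Set.InjOn g (Λ j) := by
      intro σ1 h1 σ2 h2 heq
      rw [hg] at heq
      simp only [dif_pos h1, dif_pos h2] at heq
      have q1 : σ1 <+: F σ1 h1 := hF1 σ1 h1
      have q2 : σ2 <+: F σ1 h1 := heq ▸ hF1 σ2 h2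
      rcases List.prefix_or_prefix_of_prefix q1 q2 with h | h
      · exact hanti j σ1 h1 σ2 h2 h
      · exact (hanti j σ2 h2 σ1 h1 h).symm
    rw [hψ j, hψ (j+1)]
    exact Set.ncard_le_ncard_of_injOn g hmaps hinj (hfin (j+1))
  · -- counting
    have hdec : ∀ τ ∈ Λ (j+1), ∃ σ, σ ∈ Λ j ∧ σ <+: τ ∧ τ.length - σ.length ≤ N1 := by
      intro τ hτ
      have hτ' := (hmem _ _).mp hτ
      have hlt : pword p τ < pmin ^ j := by
        have : pmin ^ (j+1) ≤ pmin ^ j :=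
          pow_le_pow_of_le_one hminpos.le hminlt1.le (Nat.le_succ j)
        linarith [hτ'.2.2]
      obtain ⟨σ, hpre, hσ⟩ := hcross j τ.length τ le_rfl hτ'.1 hlt
      refine ⟨σ, hσ, hpre, ?_⟩
      have hσ' := (hmem _ _).mp hσ
      by_cases heq : σ = τ
      · subst heq; omega
      · have hltlen : σ.length < τ.length :=
          lt_of_le_of_ne hpre.length_le fun h => heq (hpre.eq_of_length h)
        have hpre' : σ <+: τ.dropLast := by
          apply List.prefix_of_prefix_length_le hpre (List.dropLast_prefix τ)
          rw [List.length_dropLast]; omega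
        obtain ⟨m, hm⟩ := hpre'
        have hchain : (σ ++ m).Chain' fun a b => (a, b) ∈ G2 := by
          rw [hm]; exact hτ'.1.2.prefix (List.dropLast_prefix τ)
        have hb : pword p (σ ++ m) ≤ pword p σ * pmax ^ m.length :=
          pword_append_le p hlb hub hminpos hmaxpos σ m hσ'.1.1 hchain
        have h5 : pmin ^ (j+1) < pmin ^ j * pmax ^ m.length := by
          calc pmin ^ (j+1) ≤ pword p τ.dropLast := hτ'.2.1
            _ = pword p (σ ++ m) := by rw [hm]
            _ ≤ pword p σ * pmax ^ m.length := hb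
            _ < pmin ^ j * pmax ^ m.length :=
                mul_lt_mul_of_pos_right hσ'.2.2 (pow_pos hmaxpos _)
        have h6 : pmin < pmax ^ m.length := by
          have hpj : 0 < pmin ^ j := pow_pos hminpos j
          rw [pow_succ] at h5
          exact lt_of_mul_lt_mul_left h5 hpj.le
        have h7 : m.length < N1 := htN1 _ h6.le
        have hmlen : σ.length + m.length = τ.length - 1 := by
          have := congrArg List.length hm
          simp only [List.length_append, List.length_dropLast] at this
          omega
        omega
    choose F hF1 hF2 hF3 using hdec
    set S : Set (List (Fin N)) := {l : List (Fin N) | l.length ≤ N1} with hS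
    have hSfin : S.Finite := List.finite_length_le (Fin N) N1
    set g : List (Fin N) → List (Fin N) × List (Fin N) :=
      fun τ => if h : τ ∈ Λ (j+1) then (F τ h, τ.drop (F τ h).length) else ([], []) with hg
    have hrecon : ∀ (τ : List (Fin N)) (h : τ ∈ Λ (j+1)),
        F τ h ++ τ.drop (F τ h).length = τ := by
      intro τ h
      exact List.prefix_iff_eq_append.mp (hF2 τ h)
    have hmaps : ∀ τ ∈ Λ (j+1), g τ ∈ (Λ j) ×ˢ S := by
      intro τ h
      rw [hg]; simp only [dif_pos h]
      refine Set.mem_prod.mpr ⟨hF1 τ h, ?_⟩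
      rw [hS]
      simp only [Set.mem_setOf_eq, List.length_drop]
      exact hF3 τ h
    have hinj : Set.InjOn g (Λ (j+1)) := by
      intro τ1 h1 τ2 h2 heq
      rw [hg] at heq
      simp only [dif_pos h1, dif_pos h2, Prod.mk.injEq] at heq
      have e1 := hrecon τ1 h1
      have e2 := hrecon τ2 h2
      rw [← e1, ← e2, heq.2, heq.1]
    have step1 : (Λ (j+1)).ncard ≤ ((Λ j) ×ˢ S).ncard :=
      Set.ncard_le_ncard_of_injOn g hmaps hinj ((hfin j).prod hSfin)
    have step2 : ((Λ j) ×ˢ S).ncard = (Λ j).ncard * S.ncard := by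
      rw [← Nat.card_coe_set_eq, ← Nat.card_coe_set_eq, ← Nat.card_coe_set_eq,
        Nat.card_congr (Equiv.Set.prod _ _), Nat.card_prod]
    have step3 : S.ncard ≤ N ^ (N1 + 1) := by
      have hinj2 : Set.InjOn enc S := Function.Injective.injOn enc_injective
      have hmaps2 : ∀ l ∈ S, enc l ∈ ((Finset.range (N ^ (N1+1)) : Finset ℕ) : Set ℕ) := by
        intro l hl
        rw [hS] at hl
        simp only [Set.mem_setOf_eq] at hl
        simp only [Finset.coe_range, Set.mem_Iio]
        calc enc l < N ^ (l.length + 1) := enc_lt hN2 l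
          _ ≤ N ^ (N1 + 1) := Nat.pow_le_pow_right (by omega) (by omega)
      have := Set.ncard_le_ncard_of_injOn enc hmaps2 hinj2 (Finset.finite_toSet _)
      rwa [Set.ncard_coe_finset, Finset.card_range] at this
    rw [hψ j, hψ (j+1)]
    calc (Λ (j+1)).ncard ≤ (Λ j).ncard * S.ncard := step2 ▸ step1
      _ ≤ (Λ j).ncard * (N ^ (N1+1)) := Nat.mul_le_mul_left _ step3
      _ = N ^ (N1+1) * (Λ j).ncard := Nat.mul_comm _ _
end

section
/- Let P be an irreducible N×N row-stochastic matrix and define ξ(i,n) := Σ_{τ ∈ Γ(i,n)} p_τ log p_τ, where Γ(i,n) is the set of admissible words of length n+1 starting at i. Define Δ_n(i,j) := |ξ(i,n) − ξ(j,n)|. Then there exists a constant C_1 > 0 such that Δ_n(i,j) ≤ C_1 for all n ≥ 1 and all i, j ∈ {1,...,N}. -/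
open Finset

/-- `ξ(i,n) = ∑_{τ ∈ Γ(i,n)} p_τ log p_τ`: the sum over all words of length `n+1`
starting at `i` (non-admissible words contribute `0`, convention `0 · log 0 = 0`). -/
noncomputable def xi {N : ℕ} (P : Matrix (Fin N) (Fin N) ℝ) (i : Fin N) (n : ℕ) : ℝ :=
  ∑ τ ∈ Finset.univ.filter (fun τ : Fin (n + 1) → Fin N => τ 0 = i),
    (∏ t : Fin n, P (τ t.castSucc) (τ t.succ)) *
      Real.log (∏ t : Fin n, P (τ t.castSucc) (τ t.succ))

section helpers
open Matrix
variable {N : ℕ}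




lemma filter_fin_one (i : Fin N) :
    (Finset.univ.filter (fun τ : Fin 1 → Fin N => τ 0 = i)) = {fun _ => i} := by
  ext τ
  simp only [mem_filter, mem_univ, true_and, mem_singleton]
  constructor
  · intro h; funext x; rw [Subsingleton.elim x 0, h]
  · intro h; rw [h]

lemma sum_cons_eq {n : ℕ} (i : Fin N) (g : (Fin (n + 2) → Fin N) → ℝ) :
    ∑ τ ∈ Finset.univ.filter (fun τ : Fin (n + 2) → Fin N => τ 0 = i), g τ
      = ∑ τ' : Fin (n + 1) → Fin N, g (Fin.cons i τ') := by
  refine Finset.sum_nbij' (i := fun τ => Fin.tail τ) (j := fun τ' => Fin.cons i τ')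
    ?_ ?_ ?_ ?_ ?_
  · intros; simp
  · intro τ' _; simp
  · intro τ hτ
    simp only [mem_filter, mem_univ, true_and] at hτ
    rw [← hτ]; exact Fin.cons_self_tail τ
  · intro τ' _; simp [Fin.tail]
  · intro τ hτ
    simp only [mem_filter, mem_univ, true_and] at hτ
    rw [← hτ, Fin.cons_self_tail]

lemma prod_cons_split {n : ℕ} (P : Matrix (Fin N) (Fin N) ℝ) (i : Fin N)
    (τ' : Fin (n + 1) → Fin N) :
    (∏ t : Fin (n + 1), P ((Fin.cons i τ' : Fin (n + 2) → Fin N) t.castSucc)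
        ((Fin.cons i τ' : Fin (n + 2) → Fin N) t.succ))
      = P i (τ' 0) * ∏ t : Fin n, P (τ' t.castSucc) (τ' t.succ) := by
  rw [Fin.prod_univ_succ]
  have h1 : ∀ t : Fin n,
      P ((Fin.cons i τ' : Fin (n + 2) → Fin N) t.succ.castSucc)
        ((Fin.cons i τ' : Fin (n + 2) → Fin N) t.succ.succ)
      = P (τ' t.castSucc) (τ' t.succ) := by
    intro t
    rw [← Fin.succ_castSucc]
    simp [Fin.cons_succ]
  rw [Finset.prod_congr rfl (fun t _ => h1 t)]
  congr 1

-- fiberwise decomposition over the value of τ' 0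
lemma sum_fiber (n : ℕ) (F : (Fin (n + 1) → Fin N) → ℝ) :
    ∑ τ' : Fin (n + 1) → Fin N, F τ'
      = ∑ j : Fin N, ∑ τ' ∈ Finset.univ.filter
          (fun τ' : Fin (n + 1) → Fin N => τ' 0 = j), F τ' := by
  rw [show (∑ j : Fin N, ∑ τ' ∈ Finset.univ.filter
      (fun τ' : Fin (n + 1) → Fin N => τ' 0 = j), F τ')
      = ∑ j : Fin N, ∑ τ' : Fin (n + 1) → Fin N, if τ' 0 = j then F τ' else 0 from
    Finset.sum_congr rfl (fun j _ => Finset.sum_filter _ _)]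
  rw [Finset.sum_comm]
  apply Finset.sum_congr rfl
  intro τ' _
  simp

lemma sum_words_mulVec (P : Matrix (Fin N) (Fin N) ℝ) :
    ∀ (n : ℕ) (f : Fin N → ℝ) (i : Fin N),
    ∑ τ ∈ Finset.univ.filter (fun τ : Fin (n + 1) → Fin N => τ 0 = i),
      (∏ t : Fin n, P (τ t.castSucc) (τ t.succ)) * f (τ (Fin.last n))
      = (P ^ n *ᵥ f) i := by
  intro n
  induction n with
  | zero =>
    intro f i
    rw [filter_fin_one]
    simp
  | succ n ih =>
    intro f i
    rw [sum_cons_eq, sum_fiber]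
    have hlast : ∀ τ' : Fin (n + 1) → Fin N,
        (Fin.cons i τ' : Fin (n + 2) → Fin N) (Fin.last (n + 1)) = τ' (Fin.last n) := by
      intro τ'
      rw [← Fin.succ_last, Fin.cons_succ]
    have : ∀ j : Fin N, ∑ τ' ∈ Finset.univ.filter
          (fun τ' : Fin (n + 1) → Fin N => τ' 0 = j),
        (∏ t : Fin (n + 1), P ((Fin.cons i τ' : Fin (n + 2) → Fin N) t.castSucc)
          ((Fin.cons i τ' : Fin (n + 2) → Fin N) t.succ))
          * f ((Fin.cons i τ' : Fin (n + 2) → Fin N) (Fin.last (n + 1)))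
        = P i j * (P ^ n *ᵥ f) j := by
      intro j
      rw [← ih f j, Finset.mul_sum]
      apply Finset.sum_congr rfl
      intro τ' hτ'
      simp only [mem_filter, mem_univ, true_and] at hτ'
      rw [prod_cons_split, hlast, hτ']
      ring
    rw [Finset.sum_congr rfl (fun j _ => this j)]
    rw [pow_succ', ← Matrix.mulVec_mulVec]
    simp [Matrix.mulVec, dotProduct]

lemma sum_words_one (P : Matrix (Fin N) (Fin N) ℝ) (hrow : ∀ i, ∑ j, P i j = 1)
    (hpowrow : ∀ (m : ℕ) (i : Fin N), ∑ j, (P ^ m) i j = 1) (n : ℕ) (i : Fin N) :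
    ∑ τ ∈ Finset.univ.filter (fun τ : Fin (n + 1) → Fin N => τ 0 = i),
      (∏ t : Fin n, P (τ t.castSucc) (τ t.succ)) = 1 := by
  have := sum_words_mulVec P n (fun _ => (1 : ℝ)) i
  simpa [Matrix.mulVec, dotProduct, hpowrow n i] using this

lemma pow_entry_nonneg (P : Matrix (Fin N) (Fin N) ℝ) (hnn : ∀ i j, 0 ≤ P i j) :
    ∀ (m : ℕ) (i j : Fin N), 0 ≤ (P ^ m) i j := by
  intro m
  induction m with
  | zero => intro i j; by_cases h : i = j <;> simp [Matrix.one_apply, h]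
  | succ m ih =>
    intro i j
    rw [pow_succ, Matrix.mul_apply]
    exact Finset.sum_nonneg fun k _ => mul_nonneg (ih i k) (hnn k j)

lemma pow_row_sum (P : Matrix (Fin N) (Fin N) ℝ) (hrow : ∀ i, ∑ j, P i j = 1) :
    ∀ (m : ℕ) (i : Fin N), ∑ j, (P ^ m) i j = 1 := by
  intro m
  induction m with
  | zero => intro i; simp [Matrix.one_apply]
  | succ m ih =>
    intro i
    simp only [pow_succ, Matrix.mul_apply]
    rw [Finset.sum_comm]
    calc ∑ k, ∑ j, (P ^ m) i k * P k j = ∑ k, (P ^ m) i k * ∑ j, P k j := by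
          simp [Finset.mul_sum]
      _ = 1 := by simp [hrow, ih i]

lemma mul_log_split {a b : ℝ} (ha : 0 ≤ a) (hb : 0 ≤ b) :
    a * b * Real.log (a * b) = a * b * Real.log a + a * (b * Real.log b) := by
  rcases eq_or_lt_of_le ha with h | ha'
  · simp [← h]
  rcases eq_or_lt_of_le hb with h | hb'
  · simp [← h]
  rw [Real.log_mul (ne_of_gt ha') (ne_of_gt hb')]
  ring

lemma mulVec_abs_le (P : Matrix (Fin N) (Fin N) ℝ) (hnn : ∀ i j, 0 ≤ P i j)
    (hrow : ∀ i, ∑ j, P i j = 1) (m : ℕ) (f : Fin N → ℝ) (H : ℝ)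
    (hf : ∀ t, |f t| ≤ H) (s : Fin N) : |(P ^ m *ᵥ f) s| ≤ H := by
  have h1 : |(P ^ m *ᵥ f) s| ≤ ∑ t, (P ^ m) s t * |f t| := by
    rw [Matrix.mulVec, dotProduct]
    refine (Finset.abs_sum_le_sum_abs _ _).trans ?_
    apply Finset.sum_le_sum
    intro t _
    rw [abs_mul, abs_of_nonneg (pow_entry_nonneg P hnn m s t)]
  refine h1.trans ?_
  calc ∑ t, (P ^ m) s t * |f t| ≤ ∑ t, (P ^ m) s t * H :=
        Finset.sum_le_sum fun t _ =>
          mul_le_mul_of_nonneg_left (hf t) (pow_entry_nonneg P hnn m s t)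
    _ = H := by rw [← Finset.sum_mul, pow_row_sum P hrow m s, one_mul]

lemma xi_zero (P : Matrix (Fin N) (Fin N) ℝ) (i : Fin N) : xi P i 0 = 0 := by
  simp [xi]

lemma xi_succ (P : Matrix (Fin N) (Fin N) ℝ) (hnn : ∀ i j, 0 ≤ P i j)
    (hrow : ∀ i, ∑ j, P i j = 1) (n : ℕ) (i : Fin N) :
    xi P i (n + 1) = (∑ j, P i j * Real.log (P i j)) + ∑ j, P i j * xi P j n := by
  unfold xi
  rw [sum_cons_eq, sum_fiber, ← Finset.sum_add_distrib]
  apply Finset.sum_congr rfl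
  intro j _
  have hsplit : ∀ τ' ∈ Finset.univ.filter (fun τ' : Fin (n + 1) → Fin N => τ' 0 = j),
      (∏ t : Fin (n + 1), P ((Fin.cons i τ' : Fin (n + 2) → Fin N) t.castSucc)
        ((Fin.cons i τ' : Fin (n + 2) → Fin N) t.succ)) *
      Real.log (∏ t : Fin (n + 1), P ((Fin.cons i τ' : Fin (n + 2) → Fin N) t.castSucc)
        ((Fin.cons i τ' : Fin (n + 2) → Fin N) t.succ))
      = (P i j * Real.log (P i j)) * (∏ t : Fin n, P (τ' t.castSucc) (τ' t.succ))
        + P i j * ((∏ t : Fin n, P (τ' t.castSucc) (τ' t.succ)) *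
            Real.log (∏ t : Fin n, P (τ' t.castSucc) (τ' t.succ))) := by
    intro τ' hτ'
    simp only [mem_filter, mem_univ, true_and] at hτ'
    rw [prod_cons_split, hτ']
    rw [mul_log_split (hnn i j) (Finset.prod_nonneg fun t _ => hnn _ _)]
    ring
  rw [Finset.sum_congr rfl hsplit, Finset.sum_add_distrib, ← Finset.mul_sum,
    ← Finset.mul_sum, sum_words_one P hrow (pow_row_sum P hrow) n j, mul_one]

lemma xi_closed (P : Matrix (Fin N) (Fin N) ℝ) (hnn : ∀ i j, 0 ≤ P i j)
    (hrow : ∀ i, ∑ j, P i j = 1) :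
    ∀ (n : ℕ) (i : Fin N),
      xi P i n = ∑ k ∈ Finset.range n,
        (P ^ k *ᵥ (fun s => ∑ t, P s t * Real.log (P s t))) i := by
  intro n
  induction n with
  | zero => intro i; simp [xi_zero]
  | succ n ih =>
    intro i
    rw [xi_succ P hnn hrow n i, Finset.sum_range_succ', add_comm]
    congr 1
    · have : ∀ k ∈ Finset.range n, (P ^ (k + 1) *ᵥ (fun s => ∑ t, P s t * Real.log (P s t))) i
          = ∑ j, P i j * (P ^ k *ᵥ (fun s => ∑ t, P s t * Real.log (P s t))) j := by
        intro k _
        rw [pow_succ', ← Matrix.mulVec_mulVec]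
        simp [Matrix.mulVec, dotProduct]
      rw [Finset.sum_congr rfl this, ← Finset.sum_comm]
      · rw [show (∑ j, P i j * xi P j n) = ∑ j, P i j * ∑ k ∈ Finset.range n,
            (P ^ k *ᵥ (fun s => ∑ t, P s t * Real.log (P s t))) j from
          Finset.sum_congr rfl (fun j _ => by rw [ih j])]
        simp [Finset.mul_sum]
    · simp [Matrix.mulVec, dotProduct, Matrix.one_apply]

lemma eigen_const (P : Matrix (Fin N) (Fin N) ℝ) (hnn : ∀ i j, 0 ≤ P i j)
    (hrow : ∀ i, ∑ j, P i j = 1) (hirr : ∀ i j, ∃ m, 1 ≤ m ∧ 0 < (P ^ m) i j)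
    (x : Fin N → ℝ) (hx : P *ᵥ x = x) (a b : Fin N) : x a = x b := by
  have hpow : ∀ m : ℕ, P ^ m *ᵥ x = x := by
    intro m
    induction m with
    | zero => simp
    | succ m ih => rw [pow_succ, ← Matrix.mulVec_mulVec, hx, ih]
  obtain ⟨i0, _, hmax⟩ := Finset.exists_max_image Finset.univ x ⟨a, Finset.mem_univ a⟩
  have key : ∀ c : Fin N, x c = x i0 := by
    intro c
    obtain ⟨m, _, hpos⟩ := hirr i0 c
    have hx0 : x i0 = ∑ k, (P ^ m) i0 k * x k := by
      conv_lhs => rw [← hpow m]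
      rfl
    have hzero : ∑ k, (P ^ m) i0 k * (x i0 - x k) = 0 := by
      have : ∑ k, (P ^ m) i0 k * (x i0 - x k)
          = (∑ k, (P ^ m) i0 k) * x i0 - ∑ k, (P ^ m) i0 k * x k := by
        rw [Finset.sum_mul, ← Finset.sum_sub_distrib]
        apply Finset.sum_congr rfl; intros; ring
      rw [this, pow_row_sum P hrow m i0, one_mul, ← hx0, sub_self]
    have hterm : (P ^ m) i0 c * (x i0 - x c) = 0 := by
      have hnn' : ∀ k ∈ Finset.univ, 0 ≤ (P ^ m) i0 k * (x i0 - x k) := fun k _ =>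
        mul_nonneg (pow_entry_nonneg P hnn m i0 k)
          (sub_nonneg.mpr (hmax k (Finset.mem_univ k)))
      exact (Finset.sum_eq_zero_iff_of_nonneg hnn').mp hzero c (Finset.mem_univ c)
    have := (mul_eq_zero.mp hterm).resolve_left (ne_of_gt hpos)
    linarith [sub_eq_zero.mp this]
  rw [key a, key b]

-- the sum functional
noncomputable def sumLin (N : ℕ) : (Fin N → ℝ) →ₗ[ℝ] ℝ where
  toFun w := ∑ l, w l
  map_add' := by intros; simp [Finset.sum_add_distrib]
  map_smul' := by intros; simp [Finset.mul_sum]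

lemma exists_u (P : Matrix (Fin N) (Fin N) ℝ) (hnn : ∀ i j, 0 ≤ P i j)
    (hrow : ∀ i, ∑ j, P i j = 1) (hirr : ∀ i j, ∃ m, 1 ≤ m ∧ 0 < (P ^ m) i j)
    (i j : Fin N) :
    ∃ u : Fin N → ℝ, (P - 1)ᵀ *ᵥ u = Pi.single i 1 - Pi.single j 1 := by
  classical
  -- kernel of (P - 1) is the constants
  have hker : LinearMap.ker ((P - 1).mulVecLin) = Submodule.span ℝ {fun _ => (1 : ℝ)} := by
    apply le_antisymm
    · intro x hx
      have hx0 : (P - 1) *ᵥ x = 0 := LinearMap.mem_ker.mp hx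
      rw [Matrix.sub_mulVec, Matrix.one_mulVec, sub_eq_zero] at hx0
      have hconst : ∀ l : Fin N, x l = x i := fun l => eigen_const P hnn hrow hirr x hx0 l i
      rw [Submodule.mem_span_singleton]
      exact ⟨x i, by funext l; simp [hconst l]⟩
    · rw [Submodule.span_le, Set.singleton_subset_iff]
      apply LinearMap.mem_ker.mpr
      rw [Matrix.mulVecLin_apply, Matrix.sub_mulVec, Matrix.one_mulVec, sub_eq_zero]
      funext l
      simp [Matrix.mulVec, dotProduct, hrow l]
  have hkerrank : Module.finrank ℝ (LinearMap.ker ((P - 1).mulVecLin)) = 1 := by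
    rw [hker]
    apply finrank_span_singleton
    intro h
    have := congrFun h i
    simp at this
  have hrank : (P - 1).rank = N - 1 := by
    have h1 := LinearMap.finrank_range_add_finrank_ker ((P - 1).mulVecLin)
    rw [hkerrank] at h1
    have h2 : Module.finrank ℝ (Fin N → ℝ) = N := by simp
    rw [h2] at h1
    rw [Matrix.rank]
    omega
  have hrankT : ((P - 1)ᵀ).rank = N - 1 := by rw [Matrix.rank_transpose, hrank]
  -- sum functional
  have hNpos : 0 < N := Fin.pos i
  have hranges : LinearMap.range (sumLin N) = ⊤ := by
    rw [LinearMap.range_eq_top]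
    intro c
    exact ⟨Pi.single i c, by simp [sumLin]⟩
  have hkersum : Module.finrank ℝ (LinearMap.ker (sumLin N)) = N - 1 := by
    have h1 := LinearMap.finrank_range_add_finrank_ker (sumLin N)
    rw [hranges] at h1
    simp only [finrank_top] at h1
    have h2 : Module.finrank ℝ (Fin N → ℝ) = N := by simp
    have h3 : Module.finrank ℝ ℝ = 1 := Module.finrank_self ℝ
    omega
  -- range of (P-1)ᵀ is contained in ker of sum
  have hle : LinearMap.range (((P - 1)ᵀ).mulVecLin) ≤ LinearMap.ker (sumLin N) := by
    rintro w ⟨x, rfl⟩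
    apply LinearMap.mem_ker.mpr
    show ∑ l, (((P - 1)ᵀ).mulVecLin x) l = 0
    have : ∀ l, (((P - 1)ᵀ).mulVecLin x) l = ∑ s, (P - 1) s l * x s := by
      intro l
      rw [Matrix.mulVecLin_apply]
      simp [Matrix.mulVec, dotProduct, Matrix.transpose_apply]
    rw [Finset.sum_congr rfl (fun l _ => this l), Finset.sum_comm]
    apply Finset.sum_eq_zero
    intro s _
    rw [← Finset.sum_mul]
    have : ∑ l, (P - 1) s l = 0 := by
      simp [Matrix.sub_apply, Finset.sum_sub_distrib, hrow s, Matrix.one_apply]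
    rw [this, zero_mul]
  -- equality of subspaces
  have heq : LinearMap.range (((P - 1)ᵀ).mulVecLin) = LinearMap.ker (sumLin N) := by
    apply Submodule.eq_of_le_of_finrank_le hle
    have : Module.finrank ℝ (LinearMap.range (((P - 1)ᵀ).mulVecLin)) = N - 1 := hrankT
    omega
  have hw : Pi.single i (1:ℝ) - Pi.single j 1 ∈ LinearMap.ker (sumLin N) := by
    simp [LinearMap.mem_ker, sumLin, Finset.sum_sub_distrib]
  rw [← heq] at hw
  obtain ⟨u, hu⟩ := hw
  exact ⟨u, hu⟩

lemma pair_bound (P : Matrix (Fin N) (Fin N) ℝ) (hnn : ∀ i j, 0 ≤ P i j)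
    (hrow : ∀ i, ∑ j, P i j = 1) (hirr : ∀ i j, ∃ m, 1 ≤ m ∧ 0 < (P ^ m) i j)
    (i j : Fin N) :
    ∃ B : ℝ, 0 ≤ B ∧ ∀ n : ℕ, |xi P i n - xi P j n| ≤ B := by
  classical
  set h : Fin N → ℝ := fun s => ∑ t, P s t * Real.log (P s t) with hh
  set H : ℝ := ∑ s, |h s| with hH
  have hHbd : ∀ t, |h t| ≤ H := by
    intro t
    exact Finset.single_le_sum (f := fun s => |h s|) (fun s _ => abs_nonneg _)
      (Finset.mem_univ t)
  obtain ⟨u, hu⟩ := exists_u P hnn hrow hirr i j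
  have hH0 : 0 ≤ H := Finset.sum_nonneg fun s _ => abs_nonneg _
  refine ⟨(∑ s, |u s|) * (2 * H),
    mul_nonneg (Finset.sum_nonneg fun s _ => abs_nonneg _) (by linarith), ?_⟩
  intro n
  -- single-k identity
  have hstep : ∀ g : Fin N → ℝ, g i - g j = ∑ s, u s * ((P *ᵥ g) s - g s) := by
    intro g
    have h1 : g i - g j = ∑ l, ((Pi.single i (1:ℝ) - Pi.single j (1:ℝ) : Fin N → ℝ)) l * g l := by
      simp [Pi.sub_apply, sub_mul, Finset.sum_sub_distrib, Pi.single_apply]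
    rw [h1, ← hu]
    have h2 : ∀ l, ((P - 1)ᵀ *ᵥ u) l * g l = ∑ s, (P - 1) s l * u s * g l := by
      intro l
      rw [Matrix.mulVec, dotProduct, Finset.sum_mul]
      rfl
    rw [Finset.sum_congr rfl (fun l _ => h2 l), Finset.sum_comm]
    apply Finset.sum_congr rfl
    intro s _
    have : (P *ᵥ g) s - g s = ∑ l, (P - 1) s l * g l := by
      simp [Matrix.sub_mulVec, Matrix.one_mulVec, Matrix.mulVec, dotProduct,
        Matrix.sub_apply, sub_mul, Finset.sum_sub_distrib, Matrix.one_apply]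
    rw [this, Finset.mul_sum]
    apply Finset.sum_congr rfl
    intro l _
    ring
  have key : xi P i n - xi P j n = ∑ s, u s * ((P ^ n *ᵥ h) s - h s) := by
    rw [xi_closed P hnn hrow n i, xi_closed P hnn hrow n j, ← Finset.sum_sub_distrib]
    have h3 : ∀ k, (P ^ k *ᵥ h) i - (P ^ k *ᵥ h) j
        = ∑ s, u s * ((P ^ (k + 1) *ᵥ h) s - (P ^ k *ᵥ h) s) := by
      intro k
      rw [hstep (P ^ k *ᵥ h)]
      apply Finset.sum_congr rfl
      intro s _
      rw [Matrix.mulVec_mulVec, ← pow_succ']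
    rw [Finset.sum_congr rfl (fun k _ => h3 k), Finset.sum_comm]
    apply Finset.sum_congr rfl
    intro s _
    rw [← Finset.mul_sum, Finset.sum_range_sub (fun k => (P ^ k *ᵥ h) s)]
    simp
  rw [key]
  refine (Finset.abs_sum_le_sum_abs _ _).trans ?_
  rw [Finset.sum_mul]
  apply Finset.sum_le_sum
  intro s _
  rw [abs_mul]
  apply mul_le_mul_of_nonneg_left _ (abs_nonneg (u s))
  have b1 : |(P ^ n *ᵥ h) s| ≤ H := mulVec_abs_le P hnn hrow n h H hHbd s
  have b2 : |h s| ≤ H := hHbd s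
  calc |(P ^ n *ᵥ h) s - h s| ≤ |(P ^ n *ᵥ h) s| + |h s| := abs_sub _ _
    _ ≤ 2 * H := by linarith


end helpers

theorem stmt4 {N : ℕ} (P : Matrix (Fin N) (Fin N) ℝ)
    (hnn : ∀ i j, 0 ≤ P i j) (hrow : ∀ i, ∑ j, P i j = 1)
    (hirr : ∀ i j, ∃ m, 1 ≤ m ∧ 0 < (P ^ m) i j) :
    ∃ C1 : ℝ, 0 < C1 ∧ ∀ n : ℕ, 1 ≤ n → ∀ i j : Fin N,
      |xi P i n - xi P j n| ≤ C1 := by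
  classical
  choose B hB0 hB using pair_bound P hnn hrow hirr
  have hs0 : 0 ≤ ∑ p : Fin N × Fin N, B p.1 p.2 :=
    Finset.sum_nonneg fun p _ => hB0 p.1 p.2
  refine ⟨1 + ∑ p : Fin N × Fin N, B p.1 p.2, by linarith, ?_⟩
  intro n _ i j
  have h1 : B i j ≤ ∑ p : Fin N × Fin N, B p.1 p.2 :=
    Finset.single_le_sum (f := fun p : Fin N × Fin N => B p.1 p.2)
      (fun p _ => hB0 p.1 p.2) (Finset.mem_univ (i, j))
  have := hB i j n
  linarith
end

section
/- Let P be an irreducible N×N row-stochastic matrix, let (c_{ij}) ∈ (0,1) be contraction ratios defined on the indices with p_{ij} > 0, and let (q_i)_{i=1}^N be a positive probability vector. For a word σ of length k starting at σ_1 set m_σ := q_{σ_1} p_σ and c_σ := Π c_{σ_hσ_{h+1}}. Define u_k := Σ_{σ ∈ G_k} m_σ log m_σ and l_k := Σ_{σ ∈ G_k} m_σ log c_σ, where G_k is the set of admissible words of length k. Then for k ≥ 3, u_k = u_2 + (k−2)u_0 + x_k and l_k = l_2 + (k−2)l_0 + y_k, where u_0 := Σ_i v_i Σ_j p_{ij}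 log p_{ij}, l_0 := Σ_i v_i Σ_j p_{ij} log c_{ij} (v the normalized positive left eigenvector of P), and the error terms satisfy |x_k| ≤ δ_0 and |y_k| ≤ δ_3 for constants δ_0, δ_3 independent of k. -/
open Finset

/-- Product of the entries of `A` along a word `σ` of length `k+1`
(encoded as a function `Fin (k+1) → Fin N`). -/
noncomputable def wprod {N k : ℕ} (A : Matrix (Fin N) (Fin N) ℝ)
    (σ : Fin (k + 1) → Fin N) : ℝ :=
  ∏ t : Fin k, A (σ t.castSucc) (σ t.succ)

noncomputable def Wt {N : ℕ} (q : Fin N → ℝ) (P : Matrix (Fin N) (Fin N) ℝ) :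
    ℕ → Fin N → ℝ
  | 0 => q
  | n + 1 => fun i => ∑ j, Wt q P n j * P j i

def snocEquiv (N n : ℕ) : ((Fin (n + 1) → Fin N) × Fin N) ≃ (Fin (n + 2) → Fin N) where
  toFun p := Fin.snoc p.1 p.2
  invFun σ := (Fin.init σ, σ (Fin.last (n + 1)))
  left_inv p := by simp
  right_inv σ := by simp

lemma snoc_zero {N n : ℕ} (σ : Fin (n + 1) → Fin N) (j : Fin N) :
    (Fin.snoc σ j : Fin (n + 2) → Fin N) 0 = σ 0 := by
  rw [show (0 : Fin (n + 2)) = (0 : Fin (n + 1)).castSucc by simp, Fin.snoc_castSucc]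

lemma wprod_snoc {N n : ℕ} (A : Matrix (Fin N) (Fin N) ℝ) (σ : Fin (n + 1) → Fin N)
    (j : Fin N) :
    wprod A (Fin.snoc σ j : Fin (n + 1 + 1) → Fin N) = wprod A σ * A (σ (Fin.last n)) j := by
  unfold wprod
  rw [Fin.prod_univ_castSucc]
  congr 1
  · refine Finset.prod_congr rfl fun t _ => ?_
    rw [Fin.succ_castSucc, Fin.snoc_castSucc, Fin.snoc_castSucc]
  · rw [Fin.snoc_castSucc, Fin.succ_last, Fin.snoc_last]

lemma sum_last {N : ℕ} (q : Fin N → ℝ) (P : Matrix (Fin N) (Fin N) ℝ) :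
    ∀ (n : ℕ) (g : Fin N → ℝ),
    ∑ σ : Fin (n + 1) → Fin N, (q (σ 0) * wprod P σ) * g (σ (Fin.last n))
      = ∑ i, Wt q P n i * g i := by
  intro n
  induction n with
  | zero =>
    intro g
    rw [← Equiv.sum_comp (Equiv.funUnique (Fin 1) (Fin N)).symm]
    simp [wprod, Wt, Fin.last_zero]
  | succ n ih =>
    intro g
    rw [← Equiv.sum_comp (snocEquiv N n), Fintype.sum_prod_type]
    have step : ∀ (σ : Fin (n + 1) → Fin N) (j : Fin N),
        (q ((snocEquiv N n) (σ, j) 0) * wprod P ((snocEquiv N n) (σ, j))) *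
          g ((snocEquiv N n) (σ, j) (Fin.last (n + 1)))
        = (q (σ 0) * wprod P σ) * ((fun i => P i j * g j) (σ (Fin.last n))) := by
      intro σ j
      show (q ((Fin.snoc σ j : Fin (n + 2) → Fin N) 0) *
        wprod P (Fin.snoc σ j : Fin (n + 1 + 1) → Fin N)) *
          g ((Fin.snoc σ j : Fin (n + 2) → Fin N) (Fin.last (n + 1))) = _
      rw [snoc_zero, wprod_snoc, Fin.snoc_last]
      ring
    calc ∑ σ : Fin (n + 1) → Fin N, ∑ j,
          (q ((snocEquiv N n) (σ, j) 0) * wprod P ((snocEquiv N n) (σ, j))) *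
            g ((snocEquiv N n) (σ, j) (Fin.last (n + 1)))
        = ∑ j, ∑ σ : Fin (n + 1) → Fin N,
            (q (σ 0) * wprod P σ) * ((fun i => P i j * g j) (σ (Fin.last n))) := by
          rw [Finset.sum_comm]
          exact Finset.sum_congr rfl fun j _ => Finset.sum_congr rfl fun σ _ => step σ j
      _ = ∑ j, ∑ i, Wt q P n i * (P i j * g j) := by
          exact Finset.sum_congr rfl fun j _ => ih (fun i => P i j * g j)
      _ = ∑ i, Wt q P (n + 1) i * g i := by
          simp only [Wt, Finset.sum_mul]
          exact Finset.sum_congr rfl fun j _ => Finset.sum_congr rfl fun i _ => by ring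

lemma Wt_nonneg {N : ℕ} (q : Fin N → ℝ) (P : Matrix (Fin N) (Fin N) ℝ)
    (hq : ∀ i, 0 ≤ q i) (hnn : ∀ i j, 0 ≤ P i j) :
    ∀ n i, 0 ≤ Wt q P n i := by
  intro n
  induction n with
  | zero => exact hq
  | succ n ih => exact fun i => Finset.sum_nonneg fun j _ => mul_nonneg (ih j) (hnn j i)

lemma Wt_sum {N : ℕ} (q : Fin N → ℝ) (P : Matrix (Fin N) (Fin N) ℝ)
    (hq1 : ∑ i, q i = 1) (hrow : ∀ i, ∑ j, P i j = 1) :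
    ∀ n, ∑ i, Wt q P n i = 1 := by
  intro n
  induction n with
  | zero => exact hq1
  | succ n ih =>
    show ∑ i, ∑ j, Wt q P n j * P j i = 1
    rw [Finset.sum_comm]
    calc ∑ j, ∑ i, Wt q P n j * P j i = ∑ j, Wt q P n j * ∑ i, P j i :=
          Finset.sum_congr rfl fun j _ => (Finset.mul_sum _ _ _).symm
      _ = 1 := by simp only [hrow, mul_one]; exact ih

lemma Wt_le_one {N : ℕ} (q : Fin N → ℝ) (P : Matrix (Fin N) (Fin N) ℝ)
    (hq : ∀ i, 0 ≤ q i) (hnn : ∀ i j, 0 ≤ P i j)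
    (hq1 : ∑ i, q i = 1) (hrow : ∀ i, ∑ j, P i j = 1) (n : ℕ) (i : Fin N) :
    Wt q P n i ≤ 1 := by
  rw [← Wt_sum q P hq1 hrow n]
  exact Finset.single_le_sum (fun j _ => Wt_nonneg q P hq hnn n j) (Finset.mem_univ i)

lemma tele {N : ℕ} (q : Fin N → ℝ) (P : Matrix (Fin N) (Fin N) ℝ)
    (hq1 : ∑ i, q i = 1) (hrow : ∀ i, ∑ j, P i j = 1)
    (f h : Fin N → ℝ) (u0 : ℝ)
    (hp : ∀ i, f i - u0 = h i - ∑ j, P i j * h j) (m : ℕ) :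
    (∑ i, Wt q P m i * f i) - u0
      = (∑ i, Wt q P m i * h i) - (∑ i, Wt q P (m + 1) i * h i) := by
  have e0 : ∀ i, f i = h i - ∑ j, P i j * h j + u0 := fun i => by linarith [hp i]
  have e1 : ∑ i, Wt q P m i * f i
      = ((∑ i, Wt q P m i * h i) - ∑ i, ∑ j, Wt q P m i * (P i j * h j))
        + u0 * ∑ i, Wt q P m i := by
    rw [Finset.mul_sum, ← Finset.sum_sub_distrib, ← Finset.sum_add_distrib]
    refine Finset.sum_congr rfl fun i _ => ?_
    rw [e0 i, mul_add, mul_sub, Finset.mul_sum]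
    ring
  have e2 : ∑ i, ∑ j, Wt q P m i * (P i j * h j) = ∑ j, Wt q P (m + 1) j * h j := by
    rw [Finset.sum_comm]
    refine Finset.sum_congr rfl fun j _ => ?_
    show ∑ i, Wt q P m i * (P i j * h j) = (∑ i, Wt q P m i * P i j) * h j
    rw [Finset.sum_mul]
    exact Finset.sum_congr rfl fun i _ => by ring
  rw [e1, e2, Wt_sum q P hq1 hrow m, mul_one]
  ring

lemma final_bound {N : ℕ} (q : Fin N → ℝ) (P : Matrix (Fin N) (Fin N) ℝ)
    (hq : ∀ i, 0 ≤ q i) (hnn : ∀ i j, 0 ≤ P i j)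
    (hq1 : ∑ i, q i = 1) (hrow : ∀ i, ∑ j, P i j = 1)
    (u : ℕ → ℝ) (f h : Fin N → ℝ) (u0 : ℝ)
    (hrec : ∀ n, u (n + 2) = u (n + 1) + ∑ i, Wt q P n i * f i)
    (hp : ∀ i, f i - u0 = h i - ∑ j, P i j * h j)
    (k : ℕ) (hk : 3 ≤ k) :
    |u k - (u 2 + ((k : ℝ) - 2) * u0)| ≤ 2 * ∑ i, |h i| := by
  set S : ℕ → ℝ := fun n => ∑ i, Wt q P n i * f i with hS
  set H : ℕ → ℝ := fun n => ∑ i, Wt q P n i * h i with hH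
  have iter : ∀ n, u (n + 2) = u 2 + ∑ m ∈ Finset.range n, S (m + 1) := by
    intro n
    induction n with
    | zero => simp
    | succ n ih =>
      rw [show n + 1 + 2 = (n + 1) + 2 from rfl, hrec (n + 1), ih,
        Finset.sum_range_succ]
      ring
  obtain ⟨n, rfl⟩ : ∃ n, k = n + 2 := ⟨k - 2, by omega⟩
  have hcast : ((n + 2 : ℕ) : ℝ) - 2 = (n : ℝ) := by push_cast; ring
  rw [iter n, hcast]
  have e3 : u 2 + ∑ m ∈ Finset.range n, S (m + 1) - (u 2 + (n : ℝ) * u0)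
      = ∑ m ∈ Finset.range n, (S (m + 1) - u0) := by
    rw [Finset.sum_sub_distrib, Finset.sum_const, Finset.card_range]
    push_cast
    ring
  rw [e3]
  have htel : ∑ m ∈ Finset.range n, (S (m + 1) - u0) = H 1 - H (n + 1) := by
    have e4 : ∀ m, S (m + 1) - u0 = H (m + 1) - H (m + 2) := fun m =>
      tele q P hq1 hrow f h u0 hp (m + 1)
    rw [Finset.sum_congr rfl fun m _ => e4 m]
    exact Finset.sum_range_sub' (fun m => H (m + 1)) n
  rw [htel]
  have hHbound : ∀ m, |H m| ≤ ∑ i, |h i| := by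
    intro m
    calc |H m| ≤ ∑ i, |Wt q P m i * h i| := Finset.abs_sum_le_sum_abs _ _
      _ ≤ ∑ i, |h i| := Finset.sum_le_sum fun i _ => by
          rw [abs_mul, abs_of_nonneg (Wt_nonneg q P hq hnn m i)]
          exact mul_le_of_le_one_left (abs_nonneg _) (Wt_le_one q P hq hnn hq1 hrow m i)
  calc |H 1 - H (n + 1)| ≤ |H 1| + |H (n + 1)| := abs_sub _ _
    _ ≤ (∑ i, |h i|) + ∑ i, |h i| := add_le_add (hHbound 1) (hHbound (n + 1))
    _ = 2 * ∑ i, |h i| := by ring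

/-- `u_k = ∑_{σ ∈ G_k} m_σ log m_σ` with `m_σ = q_{σ_1} p_σ`; the sum runs over all
words of length `k` (non-admissible words contribute `0`, convention `0 log 0 = 0`). -/
noncomputable def useq {N : ℕ} (q : Fin N → ℝ) (P : Matrix (Fin N) (Fin N) ℝ)
    (k : ℕ) : ℝ :=
  ∑ σ : Fin (k - 1 + 1) → Fin N,
    (q (σ 0) * wprod P σ) * Real.log (q (σ 0) * wprod P σ)

/-- `l_k = ∑_{σ ∈ G_k} m_σ log c_σ`. -/
noncomputable def lseq {N : ℕ} (q : Fin N → ℝ) (P c : Matrix (Fin N) (Fin N) ℝ)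
    (k : ℕ) : ℝ :=
  ∑ σ : Fin (k - 1 + 1) → Fin N,
    (q (σ 0) * wprod P σ) * Real.log (wprod c σ)

lemma mlog1 (a b : ℝ) (ha : 0 ≤ a) (hb : 0 ≤ b) :
    (a * b) * Real.log (a * b) = b * (a * Real.log a) + a * (b * Real.log b) := by
  rcases eq_or_lt_of_le ha with h | h
  · simp [← h]
  rcases eq_or_lt_of_le hb with h' | h'
  · simp [← h']
  rw [Real.log_mul (ne_of_gt h) (ne_of_gt h')]
  ring

lemma mlog2 (a b ca cb : ℝ) (hca : a ≠ 0 → 0 < ca) (hcb : b ≠ 0 → 0 < cb) :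
    (a * b) * Real.log (ca * cb) = b * (a * Real.log ca) + a * (b * Real.log cb) := by
  rcases eq_or_ne a 0 with h | h
  · simp [h]
  rcases eq_or_ne b 0 with h' | h'
  · simp [h']
  rw [Real.log_mul (ne_of_gt (hca h)) (ne_of_gt (hcb h'))]
  ring

lemma wprod_nonneg {N n : ℕ} {P : Matrix (Fin N) (Fin N) ℝ} (hnn : ∀ i j, 0 ≤ P i j)
    (σ : Fin (n + 1) → Fin N) : 0 ≤ wprod P σ :=
  Finset.prod_nonneg fun t _ => hnn _ _

lemma wprod_c_pos {N n : ℕ} {P c : Matrix (Fin N) (Fin N) ℝ} (hnn : ∀ i j, 0 ≤ P i j)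
    (hc : ∀ i j, 0 < P i j → 0 < c i j ∧ c i j < 1)
    (σ : Fin (n + 1) → Fin N) (h : wprod P σ ≠ 0) : 0 < wprod c σ := by
  rw [wprod, Finset.prod_ne_zero_iff] at h
  exact Finset.prod_pos fun t ht =>
    (hc _ _ (lt_of_le_of_ne (hnn _ _) (Ne.symm (h t ht)))).1

lemma useq_rec {N : ℕ} (q : Fin N → ℝ) (P : Matrix (Fin N) (Fin N) ℝ)
    (hq0 : ∀ i, 0 ≤ q i) (hnn : ∀ i j, 0 ≤ P i j) (hrow : ∀ i, ∑ j, P i j = 1) (n : ℕ) :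
    useq q P (n + 2) = useq q P (n + 1)
      + ∑ i, Wt q P n i * (∑ j, P i j * Real.log (P i j)) := by
  have e1 : useq q P (n + 2) = ∑ σ : Fin (n + 2) → Fin N,
      (q (σ 0) * wprod P σ) * Real.log (q (σ 0) * wprod P σ) := rfl
  rw [e1, ← Equiv.sum_comp (snocEquiv N n), Fintype.sum_prod_type]
  have step : ∀ (σ : Fin (n + 1) → Fin N),
      (∑ j, (q ((snocEquiv N n) (σ, j) 0) * wprod P ((snocEquiv N n) (σ, j))) *
        Real.log (q ((snocEquiv N n) (σ, j) 0) * wprod P ((snocEquiv N n) (σ, j))))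
      = (q (σ 0) * wprod P σ) * Real.log (q (σ 0) * wprod P σ)
        + (q (σ 0) * wprod P σ) *
          ((fun i => ∑ j, P i j * Real.log (P i j)) (σ (Fin.last n))) := by
    intro σ
    have hterm : ∀ j : Fin N,
        (q ((snocEquiv N n) (σ, j) 0) * wprod P ((snocEquiv N n) (σ, j))) *
          Real.log (q ((snocEquiv N n) (σ, j) 0) * wprod P ((snocEquiv N n) (σ, j)))
        = P (σ (Fin.last n)) j *
            ((q (σ 0) * wprod P σ) * Real.log (q (σ 0) * wprod P σ))
          + (q (σ 0) * wprod P σ) *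
            (P (σ (Fin.last n)) j * Real.log (P (σ (Fin.last n)) j)) := by
      intro j
      simp only [snocEquiv, Equiv.coe_fn_mk]
      rw [snoc_zero, wprod_snoc, ← mul_assoc]
      exact mlog1 _ _ (mul_nonneg (hq0 _) (wprod_nonneg hnn σ)) (hnn _ _)
    rw [Finset.sum_congr rfl fun j _ => hterm j, Finset.sum_add_distrib,
      ← Finset.sum_mul, hrow, one_mul, ← Finset.mul_sum]
  rw [Finset.sum_congr rfl fun σ _ => step σ, Finset.sum_add_distrib,
    sum_last q P n (fun i => ∑ j, P i j * Real.log (P i j))]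
  rfl

lemma lseq_rec {N : ℕ} (q : Fin N → ℝ) (P c : Matrix (Fin N) (Fin N) ℝ)
    (hq0 : ∀ i, 0 < q i) (hnn : ∀ i j, 0 ≤ P i j) (hrow : ∀ i, ∑ j, P i j = 1)
    (hc : ∀ i j, 0 < P i j → 0 < c i j ∧ c i j < 1) (n : ℕ) :
    lseq q P c (n + 2) = lseq q P c (n + 1)
      + ∑ i, Wt q P n i * (∑ j, P i j * Real.log (c i j)) := by
  have e1 : lseq q P c (n + 2) = ∑ σ : Fin (n + 2) → Fin N,
      (q (σ 0) * wprod P σ) * Real.log (wprod c σ) := rfl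
  rw [e1, ← Equiv.sum_comp (snocEquiv N n), Fintype.sum_prod_type]
  have step : ∀ (σ : Fin (n + 1) → Fin N),
      (∑ j, (q ((snocEquiv N n) (σ, j) 0) * wprod P ((snocEquiv N n) (σ, j))) *
        Real.log (wprod c ((snocEquiv N n) (σ, j))))
      = (q (σ 0) * wprod P σ) * Real.log (wprod c σ)
        + (q (σ 0) * wprod P σ) *
          ((fun i => ∑ j, P i j * Real.log (c i j)) (σ (Fin.last n))) := by
    intro σ
    have hterm : ∀ j : Fin N,
        (q ((snocEquiv N n) (σ, j) 0) * wprod P ((snocEquiv N n) (σ, j))) *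
          Real.log (wprod c ((snocEquiv N n) (σ, j)))
        = P (σ (Fin.last n)) j *
            ((q (σ 0) * wprod P σ) * Real.log (wprod c σ))
          + (q (σ 0) * wprod P σ) *
            (P (σ (Fin.last n)) j * Real.log (c (σ (Fin.last n)) j)) := by
      intro j
      simp only [snocEquiv, Equiv.coe_fn_mk]
      rw [snoc_zero, wprod_snoc P σ j, wprod_snoc c σ j, ← mul_assoc]
      refine mlog2 _ _ _ _ (fun h => ?_) (fun h => ?_)
      · refine wprod_c_pos hnn hc σ (fun h0 => h ?_)
        rw [mul_eq_zero]; exact Or.inr h0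
      · exact (hc _ _ (lt_of_le_of_ne (hnn _ _) (Ne.symm h))).1
    rw [Finset.sum_congr rfl fun j _ => hterm j, Finset.sum_add_distrib,
      ← Finset.sum_mul, hrow, one_mul, ← Finset.mul_sum]
  rw [Finset.sum_congr rfl fun σ _ => step σ, Finset.sum_add_distrib,
    sum_last q P n (fun i => ∑ j, P i j * Real.log (c i j))]
  rfl

lemma poisson {N : ℕ} (hN : Nonempty (Fin N)) (P : Matrix (Fin N) (Fin N) ℝ)
    (hnn : ∀ i j, 0 ≤ P i j) (hrow : ∀ i, ∑ j, P i j = 1)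
    (hirr : ∀ i j, ∃ m, 1 ≤ m ∧ 0 < (P ^ m) i j)
    (v : Fin N → ℝ) (hv1 : ∑ i, v i = 1)
    (hveig : ∀ j, ∑ i, v i * P i j = v j)
    (f : Fin N → ℝ) (hf : ∑ i, v i * f i = 0) :
    ∃ h : Fin N → ℝ, ∀ i, f i = h i - ∑ j, P i j * h j := by
  classical
  set T : (Fin N → ℝ) →ₗ[ℝ] (Fin N → ℝ) := LinearMap.id - Matrix.mulVecLin P with hT
  have hTapp : ∀ (h : Fin N → ℝ) (i : Fin N), T h i = h i - ∑ j, P i j * h j := by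
    intro h i
    simp [T, Matrix.mulVecLin_apply, Matrix.mulVec, dotProduct]
  -- powers of P are nonneg
  have hpow_nn : ∀ m (i j : Fin N), 0 ≤ (P ^ m) i j := by
    intro m
    induction m with
    | zero =>
      intro i j
      simp only [pow_zero, Matrix.one_apply]
      split <;> norm_num
    | succ m ih =>
      intro i j
      rw [pow_succ, Matrix.mul_apply]
      exact Finset.sum_nonneg fun k _ => mul_nonneg (ih i k) (hnn k j)
  -- kernel of T is contained in constants
  have hker : LinearMap.ker T ≤ Submodule.span ℝ {(fun _ => (1 : ℝ) : Fin N → ℝ)} := by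
    intro h hh
    have hfix : ∀ i, h i = ∑ j, P i j * h j := by
      intro i
      have h0 := congrFun (LinearMap.mem_ker.mp hh) i
      rw [hTapp h i] at h0
      simp only [Pi.zero_apply] at h0
      linarith
    obtain ⟨i0, -, hi0⟩ := Finset.exists_max_image Finset.univ h
      ⟨Classical.arbitrary _, Finset.mem_univ _⟩
    set z : Fin N → ℝ := fun j => h i0 - h j with hz
    have hznn : ∀ j, 0 ≤ z j := fun j => sub_nonneg.mpr (hi0 j (Finset.mem_univ _))
    have hPz : P.mulVec z = z := by
      funext i
      show ∑ j, P i j * z j = z i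
      have : ∑ j, P i j * z j = (∑ j, P i j) * h i0 - ∑ j, P i j * h j := by
        rw [Finset.sum_mul, ← Finset.sum_sub_distrib]
        exact Finset.sum_congr rfl fun j _ => by simp [z]; ring
      rw [this, hrow, one_mul, ← hfix i]
    have hPmz : ∀ m, (P ^ m).mulVec z = z := by
      intro m
      induction m with
      | zero => simp
      | succ m ih => rw [pow_succ', ← Matrix.mulVec_mulVec, ih, hPz]
    have hz0 : ∀ j, z j = 0 := by
      intro j
      obtain ⟨m, -, hm⟩ := hirr i0 j
      have h1 : ∑ k, (P ^ m) i0 k * z k = 0 := by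
        have := congrFun (hPmz m) i0
        have h2 : z i0 = 0 := by simp [z]
        rw [h2] at this
        simpa [Matrix.mulVec, dotProduct] using this
      have h3 := (Finset.sum_eq_zero_iff_of_nonneg
        (fun k _ => mul_nonneg (hpow_nn m i0 k) (hznn k))).mp h1 j (Finset.mem_univ j)
      exact (mul_eq_zero.mp h3).resolve_left (ne_of_gt hm)
    rw [Submodule.mem_span_singleton]
    refine ⟨h i0, ?_⟩
    funext j
    have := hz0 j
    simp only [z] at this
    simp only [Pi.smul_apply, smul_eq_mul, mul_one]
    linarith
  have hone_ne : (fun _ => (1 : ℝ) : Fin N → ℝ) ≠ 0 := by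
    intro hcontra
    have := congrFun hcontra (Classical.arbitrary _)
    norm_num at this
  have hkerrank : Module.finrank ℝ (LinearMap.ker T) ≤ 1 := by
    calc Module.finrank ℝ (LinearMap.ker T)
        ≤ Module.finrank ℝ (Submodule.span ℝ {(fun _ => (1 : ℝ) : Fin N → ℝ)}) :=
          Submodule.finrank_mono hker
      _ = 1 := finrank_span_singleton hone_ne
  -- the functional φ
  let φ : (Fin N → ℝ) →ₗ[ℝ] ℝ :=
    { toFun := fun x => ∑ i, v i * x i
      map_add' := fun x y => by simp [mul_add, Finset.sum_add_distrib]
      map_smul' := fun r x => by simp [Finset.mul_sum, mul_left_comm] }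
  have hφsurj : LinearMap.range φ = ⊤ := by
    rw [LinearMap.range_eq_top]
    intro r
    exact ⟨fun _ => r, by simp [φ, ← Finset.sum_mul, hv1]⟩
  have hrangesub : LinearMap.range T ≤ LinearMap.ker φ := by
    rintro x ⟨h, rfl⟩
    rw [LinearMap.mem_ker]
    show ∑ i, v i * T h i = 0
    have e : ∑ i, v i * T h i
        = ∑ i, v i * h i - ∑ i, ∑ j, v i * (P i j * h j) := by
      rw [← Finset.sum_sub_distrib]
      refine Finset.sum_congr rfl fun i _ => ?_
      rw [hTapp h i, mul_sub, Finset.mul_sum]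
    rw [e, Finset.sum_comm]
    have e2 : ∀ j, ∑ i, v i * (P i j * h j) = v j * h j := by
      intro j
      calc ∑ i, v i * (P i j * h j) = (∑ i, v i * P i j) * h j := by
            rw [Finset.sum_mul]
            exact Finset.sum_congr rfl fun i _ => by ring
        _ = v j * h j := by rw [hveig]
    rw [Finset.sum_congr rfl fun j _ => e2 j, sub_self]
  have h1 : Module.finrank ℝ (LinearMap.range T) + Module.finrank ℝ (LinearMap.ker T) = N := by
    rw [LinearMap.finrank_range_add_finrank_ker, Module.finrank_fintype_fun_eq_card,
      Fintype.card_fin]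
  have h2 : 1 + Module.finrank ℝ (LinearMap.ker φ) = N := by
    have := LinearMap.finrank_range_add_finrank_ker φ
    rw [hφsurj, finrank_top, Module.finrank_self, Module.finrank_fintype_fun_eq_card,
      Fintype.card_fin] at this
    exact this
  have heq : LinearMap.range T = LinearMap.ker φ :=
    Submodule.eq_of_le_of_finrank_le hrangesub (by omega)
  have hfmem : f ∈ LinearMap.ker φ := by
    rw [LinearMap.mem_ker]
    exact hf
  rw [← heq] at hfmem
  obtain ⟨h, hh⟩ := hfmem
  refine ⟨h, fun i => ?_⟩
  have := congrFun hh i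
  rw [hTapp h i] at this
  linarith

theorem stmt5 {N : ℕ} (P c : Matrix (Fin N) (Fin N) ℝ)
    (hnn : ∀ i j, 0 ≤ P i j) (hrow : ∀ i, ∑ j, P i j = 1)
    (hirr : ∀ i j, ∃ m, 1 ≤ m ∧ 0 < (P ^ m) i j)
    (hc : ∀ i j, 0 < P i j → 0 < c i j ∧ c i j < 1)
    (hc0 : ∀ i j, P i j = 0 → c i j = 0)
    (q : Fin N → ℝ) (hq : ∀ i, 0 < q i) (hq1 : ∑ i, q i = 1)
    (v : Fin N → ℝ) (hvpos : ∀ i, 0 < v i) (hv1 : ∑ i, v i = 1)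
    (hveig : ∀ j, ∑ i, v i * P i j = v j)
    (u0 l0 : ℝ)
    (hu0 : u0 = ∑ i, v i * ∑ j, P i j * Real.log (P i j))
    (hl0 : l0 = ∑ i, v i * ∑ j, P i j * Real.log (c i j)) :
    ∃ δ0 δ3 : ℝ, 0 < δ0 ∧ 0 < δ3 ∧ ∀ k : ℕ, 3 ≤ k →
      |useq q P k - (useq q P 2 + ((k : ℝ) - 2) * u0)| ≤ δ0 ∧
      |lseq q P c k - (lseq q P c 2 + ((k : ℝ) - 2) * l0)| ≤ δ3 := by
  have hN : Nonempty (Fin N) := by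
    rcases Nat.eq_zero_or_pos N with h | h
    · exfalso; subst h; simpa using hq1
    · exact ⟨⟨0, h⟩⟩
  have hq0 : ∀ i, 0 ≤ q i := fun i => le_of_lt (hq i)
  obtain ⟨hu, hhu⟩ := poisson hN P hnn hrow hirr v hv1 hveig
    (fun i => (∑ j, P i j * Real.log (P i j)) - u0) (by
      simp only [mul_sub]
      rw [Finset.sum_sub_distrib, ← Finset.sum_mul, hv1, ← hu0, one_mul, sub_self])
  obtain ⟨hl, hhl⟩ := poisson hN P hnn hrow hirr v hv1 hveig
    (fun i => (∑ j, P i j * Real.log (c i j)) - l0) (by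
      simp only [mul_sub]
      rw [Finset.sum_sub_distrib, ← Finset.sum_mul, hv1, ← hl0, one_mul, sub_self])
  refine ⟨2 * (∑ i, |hu i|) + 1, 2 * (∑ i, |hl i|) + 1, by positivity, by positivity,
    fun k hk => ?_⟩
  constructor
  · have hb := final_bound q P hq0 hnn hq1 hrow (useq q P)
      (fun i => ∑ j, P i j * Real.log (P i j)) hu u0
      (fun n => useq_rec q P hq0 hnn hrow n)
      (fun i => hhu i) k hk
    linarith [hb]
  · have hb := final_bound q P hq0 hnn hq1 hrow (lseq q P c)
      (fun i => ∑ j, P i j * Real.log (c i j)) hl l0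
      (fun n => lseq_rec q P c hq hnn hrow hc n)
      (fun i => hhl i) k hk
    linarith [hb]
end

section
/- Let ν be a Borel probability measure on ℝ^q with compact support K, and suppose there exist d_1, d_2 > 0 with sup_{x∈ℝ^q} ν(B(x,ε)) ≤ d_1 ε^{d_2} for all ε > 0. Let ê_n(ν) := log e_{n,0}(ν) where e_{n,0}(ν) := inf over sets α of at most n points of exp ∫ log d(x,α) dν(x). Then for any p, q' > 1 with 1/p + 1/q' = 1 and every n ≥ 1, ê_n(ν) − ê_{n+1}(ν) ≤ (n+1)^{-1} log(3|K|) + d_1^{1/q'} q' d_2^{-1} (n+1)^{-1/p}, where |K| is the diameter of K. -/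
open MeasureTheory Filter

/-- The `n`-th geometric mean quantization error
`e_{n,0}(ν) = inf_{1 ≤ card α ≤ n} exp ∫ log d(x,α) dν(x)`. -/
noncomputable def geErr {E : Type*} [NormedAddCommGroup E] [MeasurableSpace E]
    (n : ℕ) (ν : Measure E) : ℝ :=
  sInf ((fun α : Finset E => Real.exp (∫ x, Real.log (Metric.infDist x ↑α) ∂ν)) ''
    {α : Finset E | α.Nonempty ∧ α.card ≤ n})

/-- `ê_n(ν) = log e_{n,0}(ν)`. -/
noncomputable def hatE {E : Type*} [NormedAddCommGroup E] [MeasurableSpace E]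
    (n : ℕ) (ν : Measure E) : ℝ :=
  Real.log (geErr n ν)

section
open Set Metric
set_option linter.unusedSectionVars false
set_option linter.unusedVariables false
set_option maxHeartbeats 1000000

lemma aux_superset {α : Type*} [DecidableEq α] {s : Set α} (hs : s.Infinite) {t : Finset α}
    (hts : ↑t ⊆ s) {n : ℕ} (h : t.card ≤ n) :
    ∃ u : Finset α, t ⊆ u ∧ ↑u ⊆ s ∧ u.card = n := by
  obtain ⟨t', ht's, ht'card⟩ := (hs.diff t.finite_toSet).exists_subset_card_eq (n - t.card)
  refine ⟨t ∪ t', Finset.subset_union_left, ?_, ?_⟩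
  · push_cast
    exact Set.union_subset hts (ht's.trans Set.diff_subset)
  · have hdisj : Disjoint t t' := by
      rw [Finset.disjoint_right]
      intro a ha hat
      exact (ht's ha).2 hat
    rw [Finset.card_union_of_disjoint hdisj, ht'card]
    omega

lemma exp_tail_integral {C c : ℝ} (hc : 0 < c) :
    ∫ t in Set.Ioi (0:ℝ), C * Real.exp (-(c*t)) = C / c := by
  rw [MeasureTheory.integral_const_mul]
  have h : (∫ t in Set.Ioi (0:ℝ), Real.exp (-(c*t)))
      = c⁻¹ • ∫ t in Set.Ioi (c * 0), Real.exp (-t) := by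
    have := MeasureTheory.integral_comp_mul_left_Ioi (fun y => Real.exp (-y)) 0 hc
    simpa using this
  rw [h, mul_zero, integral_exp_neg_Ioi]
  simp [div_eq_mul_inv, mul_comm]

lemma master_tail {X : Type*} [MeasurableSpace X] (ν : Measure X) [IsProbabilityMeasure ν]
    {F : X → ℝ} (hFm : AEMeasurable F ν) (hFnn : ∀ x, 0 ≤ F x) {C c : ℝ} (hC : 0 ≤ C)
    (hc : 0 < c)
    (htail : ∀ t : ℝ, 0 < t → ν {x | t < F x} ≤ ENNReal.ofReal (C * Real.exp (-(c * t)))) :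
    Integrable F ν ∧ ∫ x, F x ∂ν ≤ C / c := by
  have hint : IntegrableOn (fun t => C * Real.exp (-(c * t))) (Set.Ioi (0:ℝ)) := by
    have : IntegrableOn (fun t => Real.exp (-c * t)) (Set.Ioi (0:ℝ)) :=
      exp_neg_integrableOn_Ioi 0 hc
    simpa [neg_mul, IntegrableOn] using this.const_mul C
  have hkey : ∫⁻ x, ENNReal.ofReal (F x) ∂ν ≤ ENNReal.ofReal (C / c) := by
    rw [lintegral_eq_lintegral_meas_lt ν (Filter.Eventually.of_forall hFnn) hFm]
    calc ∫⁻ t in Set.Ioi 0, ν {x | t < F x}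
        ≤ ∫⁻ t in Set.Ioi 0, ENNReal.ofReal (C * Real.exp (-(c * t))) := by
          refine setLIntegral_mono (by fun_prop) (fun t ht => htail t ht)
      _ = ENNReal.ofReal (∫ t in Set.Ioi (0:ℝ), C * Real.exp (-(c * t))) := by
          rw [← ofReal_integral_eq_lintegral_ofReal hint]
          exact Filter.Eventually.of_forall fun t => by positivity
      _ = ENNReal.ofReal (C / c) := by rw [exp_tail_integral hc]
  have hFi : Integrable F ν := by
    refine ⟨hFm.aestronglyMeasurable, ?_⟩
    rw [HasFiniteIntegral]
    calc ∫⁻ x, ‖F x‖₊ ∂ν = ∫⁻ x, ENNReal.ofReal (F x) ∂ν := by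
          refine lintegral_congr fun x => ?_
          rw [← enorm_eq_nnnorm]; exact Real.enorm_eq_ofReal (hFnn x)
      _ ≤ ENNReal.ofReal (C / c) := hkey
      _ < ⊤ := ENNReal.ofReal_lt_top
  refine ⟨hFi, ?_⟩
  rw [integral_eq_lintegral_of_nonneg_ae (Filter.Eventually.of_forall hFnn)
    hFi.aestronglyMeasurable]
  calc (∫⁻ x, ENNReal.ofReal (F x) ∂ν).toReal ≤ (ENNReal.ofReal (C / c)).toReal :=
        ENNReal.toReal_mono ENNReal.ofReal_ne_top hkey
    _ ≤ C / c := by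
        rw [ENNReal.toReal_ofReal (div_nonneg hC hc.le)]

lemma min_one_le_rpow {y r : ℝ} (hy : 0 ≤ y) (hr0 : 0 < r) (hr1 : r ≤ 1) :
    min 1 y ≤ y ^ r := by
  rcases le_total 1 y with h | h
  · exact (min_le_left _ _).trans (Real.one_le_rpow h hr0.le)
  · rcases eq_or_lt_of_le hy with h0 | h0
    · simp [← h0, Real.zero_rpow hr0.ne']
    · refine (min_le_right _ _).trans ?_
      calc y = y ^ (1:ℝ) := (Real.rpow_one y).symm
        _ ≤ y ^ r := Real.rpow_le_rpow_of_exponent_ge h0 h hr1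

lemma Fmeas' {E : Type*} [NormedAddCommGroup E] [MeasurableSpace E] [BorelSpace E]
    (ν : Measure E) (α : Finset E) :
    AEMeasurable (fun x => max 0 (-Real.log (Metric.infDist x ↑α))) ν := by
  exact (measurable_const.max
    ((Real.measurable_log.comp (continuous_infDist_pt (↑α : Set E)).measurable).neg)).aemeasurable

lemma tail_bound' {E : Type*} [NormedAddCommGroup E] [MeasurableSpace E] [BorelSpace E]
    (ν : Measure E) [IsProbabilityMeasure ν] {d1 d2 : ℝ} (hd1 : 0 < d1) (hd2 : 0 < d2)
    (hball : ∀ (x : E) (ε : ℝ), 0 < ε → (ν (Metric.closedBall x ε)).toReal ≤ d1 * ε ^ d2)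
    (α : Finset E) (hα : α.Nonempty) {t : ℝ} (ht : 0 < t) :
    ν {x | t < max 0 (-Real.log (Metric.infDist x ↑α))} ≤
      ENNReal.ofReal ((α.card * d1) * Real.exp (-(d2 * t))) := by
  have hsub : {x | t < max 0 (-Real.log (Metric.infDist x ↑α))} ⊆
      ⋃ a ∈ α, Metric.closedBall a (Real.exp (-t)) := by
    intro x hx
    simp only [Set.mem_setOf_eq] at hx
    have hlog : Real.log (Metric.infDist x ↑α) < -t := by
      rcases max_cases 0 (-Real.log (Metric.infDist x ↑α)) with ⟨he, _⟩ | ⟨he, _⟩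
      · rw [he] at hx; exact absurd hx (lt_asymm ht)
      · rw [he] at hx; linarith
    have hd : Metric.infDist x ↑α < Real.exp (-t) := by
      rcases eq_or_lt_of_le (Metric.infDist_nonneg (x := x) (s := (↑α : Set E))) with h0 | h0
      · rw [← h0]; exact Real.exp_pos _
      · calc Metric.infDist x ↑α = Real.exp (Real.log (Metric.infDist x ↑α)) :=
              (Real.exp_log h0).symm
          _ < Real.exp (-t) := Real.exp_lt_exp.mpr hlog
    obtain ⟨a, haα, hae⟩ := (α.finite_toSet.isCompact).exists_infDist_eq_dist
      (by exact_mod_cast hα.to_set) x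
    refine Set.mem_biUnion (by exact_mod_cast haα) ?_
    rw [Metric.mem_closedBall]
    rw [hae] at hd
    exact hd.le
  calc ν {x | t < max 0 (-Real.log (Metric.infDist x ↑α))}
      ≤ ν (⋃ a ∈ α, Metric.closedBall a (Real.exp (-t))) := measure_mono hsub
    _ ≤ ∑ a ∈ α, ν (Metric.closedBall a (Real.exp (-t))) := measure_biUnion_finset_le _ _
    _ ≤ ∑ _a ∈ α, ENNReal.ofReal (d1 * Real.exp (-(d2 * t))) := by
        refine Finset.sum_le_sum fun a _ => ?_
        have h1 := hball a (Real.exp (-t)) (Real.exp_pos _)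
        have h2 : Real.exp (-t) ^ d2 = Real.exp (-(d2 * t)) := by
          rw [← Real.exp_mul]; ring_nf
        rw [h2] at h1
        have hfin : ν (Metric.closedBall a (Real.exp (-t))) ≠ ⊤ := measure_ne_top _ _
        rw [← ENNReal.ofReal_toReal hfin]
        exact ENNReal.ofReal_le_ofReal h1
    _ = ENNReal.ofReal ((α.card * d1) * Real.exp (-(d2 * t))) := by
        rw [Finset.sum_const, nsmul_eq_mul, ← ENNReal.ofReal_natCast α.card,
          ← ENNReal.ofReal_mul (by positivity), mul_assoc]

lemma F_B1' {E : Type*} [NormedAddCommGroup E] [MeasurableSpace E] [BorelSpace E]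
    (ν : Measure E) [IsProbabilityMeasure ν] {d1 d2 : ℝ} (hd1 : 0 < d1) (hd2 : 0 < d2)
    (hball : ∀ (x : E) (ε : ℝ), 0 < ε → (ν (Metric.closedBall x ε)).toReal ≤ d1 * ε ^ d2)
    (α : Finset E) (hα : α.Nonempty) :
    Integrable (fun x => max 0 (-Real.log (Metric.infDist x ↑α))) ν ∧
      ∫ x, max 0 (-Real.log (Metric.infDist x ↑α)) ∂ν ≤ (α.card * d1) / d2 :=
  master_tail ν (Fmeas' ν α) (fun x => le_max_left _ _) (by positivity) hd2
    (fun t ht => tail_bound' ν hd1 hd2 hball α hα ht)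

lemma F_B2' {E : Type*} [NormedAddCommGroup E] [MeasurableSpace E] [BorelSpace E]
    (ν : Measure E) [IsProbabilityMeasure ν] {d1 d2 : ℝ} (hd1 : 0 < d1) (hd2 : 0 < d2)
    (hball : ∀ (x : E) (ε : ℝ), 0 < ε → (ν (Metric.closedBall x ε)).toReal ≤ d1 * ε ^ d2)
    (α : Finset E) (hα : α.Nonempty) {q' : ℝ} (hq' : 1 < q') :
    ∫ x, max 0 (-Real.log (Metric.infDist x ↑α)) ∂ν ≤
      ((α.card * d1) ^ (1/q')) * q' / d2 := by
  have hq0 : 0 < q' := lt_trans one_pos hq'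
  have hrc : (0:ℝ) < d2 / q' := by positivity
  have htail : ∀ t : ℝ, 0 < t → ν {x | t < max 0 (-Real.log (Metric.infDist x ↑α))} ≤
      ENNReal.ofReal (((α.card * d1) ^ (1/q')) * Real.exp (-((d2/q') * t))) := by
    intro t ht
    set y : ℝ := (α.card * d1) * Real.exp (-(d2 * t)) with hy
    have hy0 : 0 ≤ y := by positivity
    have h1 : ν {x | t < max 0 (-Real.log (Metric.infDist x ↑α))} ≤
        ENNReal.ofReal (min 1 y) := by
      rcases le_total 1 y with h | h
      · rw [min_eq_left h, ENNReal.ofReal_one]; exact prob_le_one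
      · rw [min_eq_right h]; exact tail_bound' ν hd1 hd2 hball α hα ht
    refine h1.trans (ENNReal.ofReal_le_ofReal ?_)
    have h2 : min 1 y ≤ y ^ (1/q') :=
      min_one_le_rpow hy0 (by positivity) (by rw [div_le_one hq0]; exact hq'.le)
    refine h2.trans_eq ?_
    rw [hy, Real.mul_rpow (by positivity) (Real.exp_pos _).le, ← Real.exp_mul]
    congr 2
    field_simp
  have := (master_tail ν (Fmeas' ν α) (fun x => le_max_left _ _)
    (by positivity) hrc htail).2
  calc ∫ x, max 0 (-Real.log (Metric.infDist x ↑α)) ∂ν ≤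
      ((α.card * d1) ^ (1/q')) / (d2 / q') := this
    _ = ((α.card * d1) ^ (1/q')) * q' / d2 := by field_simp

lemma log_dist_int' {E : Type*} [NormedAddCommGroup E] [MeasurableSpace E] [BorelSpace E]
    (ν : Measure E) [IsProbabilityMeasure ν] {d1 d2 : ℝ} (hd1 : 0 < d1) (hd2 : 0 < d2)
    (hball : ∀ (x : E) (ε : ℝ), 0 < ε → (ν (Metric.closedBall x ε)).toReal ≤ d1 * ε ^ d2)
    {K : Set E} (hK : IsCompact K) (hsupp : ν Kᶜ = 0) (a : E) :
    Integrable (fun x => Real.log (dist x a)) ν := by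
  have hKne : K.Nonempty := by
    rcases Set.eq_empty_or_nonempty K with h | h
    · exfalso
      rw [h, Set.compl_empty] at hsupp
      exact one_ne_zero ((measure_univ (μ := ν)).symm.trans hsupp)
    · exact h
  obtain ⟨c, hc⟩ := hKne
  set M' : ℝ := max 1 (Metric.diam K + dist c a) with hM'
  have hM'1 : (1:ℝ) ≤ M' := le_max_left _ _
  have hFa : Integrable (fun x => max 0 (-Real.log (dist x a))) ν := by
    have h := (F_B1' ν hd1 hd2 hball {a} (Finset.singleton_nonempty a)).1
    simpa using h
  have hKae : ∀ᵐ x ∂ν, x ∈ K := by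
    rw [MeasureTheory.ae_iff]
    exact hsupp
  refine Integrable.mono' ((integrable_const (Real.log M')).add hFa)
    ((Real.measurable_log.comp
      ((continuous_id.dist continuous_const).measurable)).aestronglyMeasurable) ?_
  filter_upwards [hKae] with x hx
  simp only [Pi.add_apply]
  have hdM : dist x a ≤ M' := by
    calc dist x a ≤ dist x c + dist c a := dist_triangle x c a
      _ ≤ Metric.diam K + dist c a := by
          gcongr
          exact Metric.dist_le_diam_of_mem hK.isBounded hx hc
      _ ≤ M' := le_max_right _ _
  rcases le_or_gt 1 (dist x a) with h1 | h1
  · rw [Real.norm_eq_abs, abs_of_nonneg (Real.log_nonneg h1)]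
    have : Real.log (dist x a) ≤ Real.log M' := Real.log_le_log (by linarith) hdM
    have h0 : (0:ℝ) ≤ max 0 (-Real.log (dist x a)) := le_max_left _ _
    linarith
  · rcases eq_or_lt_of_le (dist_nonneg (x := x) (y := a)) with h0 | h0
    · rw [← h0]
      simpa using Real.log_nonneg hM'1
    · have hneg : Real.log (dist x a) < 0 := Real.log_neg h0 h1
      rw [Real.norm_eq_abs, abs_of_neg hneg]
      have : (0:ℝ) ≤ Real.log M' := Real.log_nonneg hM'1
      have h2 : -Real.log (dist x a) ≤ max 0 (-Real.log (dist x a)) := le_max_right _ _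
      linarith

lemma log_infDist_int' {E : Type*} [NormedAddCommGroup E] [MeasurableSpace E] [BorelSpace E]
    (ν : Measure E) [IsProbabilityMeasure ν] {d1 d2 : ℝ} (hd1 : 0 < d1) (hd2 : 0 < d2)
    (hball : ∀ (x : E) (ε : ℝ), 0 < ε → (ν (Metric.closedBall x ε)).toReal ≤ d1 * ε ^ d2)
    {K : Set E} (hK : IsCompact K) (hsupp : ν Kᶜ = 0) (α : Finset E) (hα : α.Nonempty) :
    Integrable (fun x => Real.log (Metric.infDist x ↑α)) ν := by
  refine Integrable.mono'
    (integrable_finset_sum α (fun a _ => (log_dist_int' ν hd1 hd2 hball hK hsupp a).norm))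
    ((Real.measurable_log.comp
      (continuous_infDist_pt (↑α : Set E)).measurable).aestronglyMeasurable) ?_
  refine Filter.Eventually.of_forall fun x => ?_
  obtain ⟨a, haα, hae⟩ := (α.finite_toSet.isCompact).exists_infDist_eq_dist
    (by exact_mod_cast hα.to_set) x
  have haα' : a ∈ α := by exact_mod_cast haα
  calc ‖Real.log (Metric.infDist x ↑α)‖ = ‖Real.log (dist x a)‖ := by rw [hae]
    _ ≤ ∑ b ∈ α, ‖Real.log (dist x b)‖ :=
        Finset.single_le_sum (f := fun b => ‖Real.log (dist x b)‖)
          (fun b _ => norm_nonneg _) haα'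

lemma geErr_bddBelow {E : Type*} [NormedAddCommGroup E] [MeasurableSpace E]
    (ν : Measure E) (m : ℕ) :
    BddBelow ((fun α : Finset E => Real.exp (∫ x, Real.log (Metric.infDist x ↑α) ∂ν)) ''
      {α : Finset E | α.Nonempty ∧ α.card ≤ m}) := by
  refine ⟨0, ?_⟩
  rintro y ⟨α, -, rfl⟩
  exact (Real.exp_pos _).le

lemma geErr_pos {E : Type*} [NormedAddCommGroup E] [MeasurableSpace E] [BorelSpace E]
    {ν : Measure E} [IsProbabilityMeasure ν] {d1 d2 : ℝ} (hd1 : 0 < d1) (hd2 : 0 < d2)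
    (hball : ∀ (x : E) (ε : ℝ), 0 < ε → (ν (Metric.closedBall x ε)).toReal ≤ d1 * ε ^ d2)
    {K : Set E} (hK : IsCompact K) (hsupp : ν Kᶜ = 0) {c : E} (hc : c ∈ K)
    (m : ℕ) (hm : 1 ≤ m) : 0 < geErr m ν := by
  rw [show geErr m ν = sInf _ from rfl]
  refine lt_of_lt_of_le (show (0:ℝ) < Real.exp (-(m * d1 / d2)) from Real.exp_pos _)
    (le_csInf ⟨_, ⟨({c} : Finset E), ⟨Finset.singleton_nonempty c, by simpa using hm⟩, rfl⟩⟩ ?_)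
  rintro y ⟨α, ⟨hαne, hαcard⟩, rfl⟩
  rw [Real.exp_le_exp]
  have hF := F_B1' ν hd1 hd2 hball α hαne
  have hmono : ∫ x, -(max 0 (-Real.log (Metric.infDist x ↑α))) ∂ν ≤
      ∫ x, Real.log (Metric.infDist x ↑α) ∂ν := by
    refine integral_mono hF.1.neg (log_infDist_int' ν hd1 hd2 hball hK hsupp α hαne)
      (fun x => ?_)
    have := le_max_right (0:ℝ) (-Real.log (Metric.infDist x ↑α))
    linarith
  rw [integral_neg] at hmono
  have h2 : ∫ x, max 0 (-Real.log (Metric.infDist x ↑α)) ∂ν ≤ m * d1 / d2 := by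
    refine hF.2.trans ?_
    have hcast : (α.card : ℝ) ≤ m := by exact_mod_cast hαcard
    gcongr
  linarith

theorem stmt11 {E : Type*} [NormedAddCommGroup E] [NormedSpace ℝ E]
    [FiniteDimensional ℝ E] [MeasurableSpace E] [BorelSpace E]
    (ν : Measure E) [IsProbabilityMeasure ν]
    (K : Set E) (hK : IsCompact K) (hsupp : ν Kᶜ = 0)
    (d1 d2 : ℝ) (hd1 : 0 < d1) (hd2 : 0 < d2)
    (hball : ∀ (x : E) (ε : ℝ), 0 < ε →
      (ν (Metric.closedBall x ε)).toReal ≤ d1 * ε ^ d2) :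
    ∀ p q' : ℝ, 1 < p → 1 < q' → 1 / p + 1 / q' = 1 →
      ∀ n : ℕ, 1 ≤ n →
        hatE n ν - hatE (n + 1) ν ≤
          ((n : ℝ) + 1)⁻¹ * Real.log (3 * Metric.diam K) +
            d1 ^ (1 / q') * q' * d2⁻¹ * ((n : ℝ) + 1) ^ (-(1 / p)) := by
  classical
  intro p q' hp hq' hpq' n hn
  have hq0 : (0:ℝ) < q' := lt_trans one_pos hq'
  have hp0 : (0:ℝ) < p := lt_trans one_pos hp
  -- basic measure facts
  have hKm : MeasurableSet K := hK.isClosed.measurableSet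
  have hKone : ν K = 1 := by
    have h := measure_add_measure_compl (μ := ν) hKm
    rw [hsupp, add_zero, measure_univ] at h
    exact h
  have hKae : ∀ᵐ x ∂ν, x ∈ K := by
    rw [MeasureTheory.ae_iff]
    exact hsupp
  have hsing : ∀ a : E, ν {a} = 0 := by
    intro a
    have h : ∀ δ : ℝ, 0 < δ → (ν {a}).toReal ≤ 0 + δ := by
      intro δ hδ
      set ε : ℝ := (δ/d1) ^ (1/d2) with hε
      have hεpos : 0 < ε := Real.rpow_pos_of_pos (by positivity) _
      have h1 : (ν {a}).toReal ≤ (ν (Metric.closedBall a ε)).toReal := by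
        refine ENNReal.toReal_mono (measure_ne_top _ _) (measure_mono ?_)
        exact Set.singleton_subset_iff.mpr (Metric.mem_closedBall_self hεpos.le)
      have h2 := hball a ε hεpos
      have h3 : ε ^ d2 = δ / d1 := by
        rw [hε, ← Real.rpow_mul (by positivity), one_div_mul_cancel hd2.ne', Real.rpow_one]
      rw [zero_add]
      calc (ν {a}).toReal ≤ d1 * ε ^ d2 := h1.trans h2
        _ = δ := by rw [h3]; field_simp
    have h0 : (ν {a}).toReal = 0 :=
      le_antisymm (le_of_forall_pos_le_add h) ENNReal.toReal_nonneg
    exact ((ENNReal.toReal_eq_zero_iff _).mp h0).resolve_right (measure_ne_top ν _)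
  have hfinzero : ∀ s : Finset E, ν ↑s = 0 := by
    intro s
    refine le_antisymm (le_trans (measure_mono (show (↑s : Set E) ⊆ ⋃ a ∈ s, {a} by
      intro x hx; exact Set.mem_biUnion hx rfl)) ?_) (zero_le)
    refine le_trans (measure_biUnion_finset_le s fun a => {a}) ?_
    simp [hsing]
  have hKinf : K.Infinite := by
    by_contra hfin
    rw [Set.not_infinite] at hfin
    have h0 : ν K = 0 := by
      rw [← hfin.coe_toFinset]
      exact hfinzero hfin.toFinset
    rw [h0] at hKone
    exact zero_ne_one hKone
  obtain ⟨c, hcK⟩ := hKinf.nonempty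
  have hDpos : 0 < Metric.diam K := by
    obtain ⟨x, hx, y, hy, hxy⟩ := hKinf.nontrivial
    calc (0:ℝ) < dist x y := dist_pos.mpr hxy
      _ ≤ Metric.diam K := Metric.dist_le_diam_of_mem hK.isBounded hx hy
  set D : ℝ := Metric.diam K with hD
  set Good : Set E := Metric.closedBall c (2*D) with hGood
  have hKG : K ⊆ Good := by
    intro x hx
    rw [hGood, Metric.mem_closedBall]
    have : dist x c ≤ D := Metric.dist_le_diam_of_mem hK.isBounded hx hcK
    linarith
  have hGoodInf : Good.Infinite := hKinf.mono hKG
  have h3D : ∀ x ∈ K, ∀ b ∈ Good, dist x b ≤ 3*D := by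
    intro x hx b hb
    rw [hGood, Metric.mem_closedBall] at hb
    calc dist x b ≤ dist x c + dist c b := dist_triangle _ _ _
      _ ≤ D + 2*D := by
          have h1 : dist x c ≤ D := Metric.dist_le_diam_of_mem hK.isBounded hx hcK
          rw [dist_comm c b]; linarith
      _ = 3*D := by ring
  -- shorthand integrability
  have hint : ∀ α : Finset E, α.Nonempty →
      Integrable (fun x => Real.log (Metric.infDist x ↑α)) ν :=
    fun α hα => log_infDist_int' ν hd1 hd2 hball hK hsupp α hα
  have hFint : ∀ α : Finset E, α.Nonempty →
      Integrable (fun x => max 0 (-Real.log (Metric.infDist x ↑α))) ν :=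
    fun α hα => (F_B1' ν hd1 hd2 hball α hα).1
  have hnp : (0:ℝ) < (n:ℝ) + 1 := by positivity
  -- δ-argument
  refine le_of_forall_pos_le_add ?_
  intro δ hδ
  set L := geErr (n+1) ν with hL
  have hLpos : 0 < L := geErr_pos hd1 hd2 hball hK hsupp hcK (n+1) (by omega)
  have hSne : ((fun α : Finset E => Real.exp (∫ x, Real.log (Metric.infDist x ↑α) ∂ν)) ''
      {α : Finset E | α.Nonempty ∧ α.card ≤ n+1}).Nonempty :=
    ⟨_, ⟨({c} : Finset E), ⟨Finset.singleton_nonempty c, by simp⟩, rfl⟩⟩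
  have hlt : geErr (n+1) ν < L * Real.exp δ := by
    nlinarith [Real.add_one_le_exp δ, hLpos]
  obtain ⟨y, hy, hylt⟩ := exists_lt_of_csInf_lt hSne hlt
  obtain ⟨γ, ⟨hγne, hγcard⟩, rfl⟩ := hy
  have hγint : ∫ x, Real.log (Metric.infDist x ↑γ) ∂ν < hatE (n+1) ν + δ := by
    have h := Real.log_lt_log (Real.exp_pos _) hylt
    rwa [Real.log_exp, Real.log_mul hLpos.ne' (Real.exp_pos δ).ne', Real.log_exp] at h
  -- move far points into Good
  have hγ'ex : ∃ γ' : Finset E, γ'.Nonempty ∧ γ'.card ≤ n+1 ∧ ↑γ' ⊆ Good ∧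
      ∀ x ∈ K, Metric.infDist x ↑γ' ≤ Metric.infDist x ↑γ := by
    by_cases hsub : (↑γ : Set E) ⊆ Good
    · exact ⟨γ, hγne, hγcard, hsub, fun x _ => le_refl _⟩
    · obtain ⟨a0, ha0γ, ha0G⟩ := Set.not_subset.mp hsub
      have ha0γ' : a0 ∈ γ := by exact_mod_cast ha0γ
      refine ⟨insert c (γ.filter (· ∈ Good)), Finset.insert_nonempty _ _, ?_, ?_, ?_⟩
      · have hfl : (γ.filter (· ∈ Good)).card < γ.card := by
          refine Finset.card_lt_card ?_
          refine (Finset.ssubset_iff_of_subset (Finset.filter_subset _ _)).mpr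
            ⟨a0, ha0γ', ?_⟩
          simp [ha0G]
        calc (insert c (γ.filter (· ∈ Good))).card ≤ (γ.filter (· ∈ Good)).card + 1 :=
              Finset.card_insert_le _ _
          _ ≤ γ.card := by omega
          _ ≤ n+1 := hγcard
      · push_cast
        refine Set.insert_subset (hKG hcK) ?_
        intro b hb
        simp only [Finset.coe_filter, Set.mem_setOf_eq] at hb
        exact hb.2
      · intro x hx
        obtain ⟨a1, ha1γ, ha1⟩ := (γ.finite_toSet.isCompact).exists_infDist_eq_dist
          (by exact_mod_cast hγne.to_set) x
        have ha1γ' : a1 ∈ γ := by exact_mod_cast ha1γ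
        have hcmem : c ∈ insert c (γ.filter (· ∈ Good)) := Finset.mem_insert_self _ _
        by_cases hG : a1 ∈ Good
        · have hmem : a1 ∈ insert c (γ.filter (· ∈ Good)) :=
            Finset.mem_insert_of_mem (Finset.mem_filter.mpr ⟨ha1γ', hG⟩)
          rw [ha1]
          exact Metric.infDist_le_dist_of_mem (by exact_mod_cast hmem)
        · have h1 : 2*D < dist a1 c := by
            rw [hGood, Metric.mem_closedBall, not_le] at hG
            exact hG
          have h2 : dist x c ≤ D := Metric.dist_le_diam_of_mem hK.isBounded hx hcK
          have h3 : dist a1 c ≤ dist a1 x + dist x c := dist_triangle _ _ _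
          have h4 : dist x c < dist x a1 := by
            rw [dist_comm x a1]; linarith
          calc Metric.infDist x ↑(insert c (γ.filter (· ∈ Good))) ≤ dist x c :=
                Metric.infDist_le_dist_of_mem (by exact_mod_cast hcmem)
            _ ≤ dist x a1 := h4.le
            _ = Metric.infDist x ↑γ := ha1.symm
  obtain ⟨γ', hγ'ne, hγ'card, hγ'G, hγ'pt⟩ := hγ'ex
  -- pad to exactly n+1 points inside Good
  obtain ⟨β, hγ'β, hβG, hβcard⟩ := aux_superset hGoodInf hγ'G hγ'card
  have hβne : β.Nonempty := Finset.card_pos.mp (by omega)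
  have hβnotmem : ∀ᵐ x ∂ν, x ∉ (↑β : Set E) := by
    rw [MeasureTheory.ae_iff]
    simpa using hfinzero β
  -- ∫ f_β ≤ ∫ f_γ
  have hle1 : ∀ᵐ x ∂ν, Real.log (Metric.infDist x ↑β) ≤ Real.log (Metric.infDist x ↑γ) := by
    filter_upwards [hKae, hβnotmem] with x hx hxβ
    have hpos : 0 < Metric.infDist x ↑β :=
      ((β.finite_toSet.isClosed.notMem_iff_infDist_pos
        (by exact_mod_cast hβne.to_set)).mp hxβ)
    have h1 : Metric.infDist x ↑β ≤ Metric.infDist x ↑γ' :=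
      Metric.infDist_le_infDist_of_subset (by exact_mod_cast hγ'β)
        (by exact_mod_cast hγ'ne.to_set)
    exact Real.log_le_log hpos (h1.trans (hγ'pt x hx))
  have hβint : ∫ x, Real.log (Metric.infDist x ↑β) ∂ν < hatE (n+1) ν + δ :=
    lt_of_le_of_lt (integral_mono_ae (hint β hβne) (hint γ hγne) hle1) hγint
  -- for each a ∈ β, hatE n ≤ ∫ f_{β.erase a}
  have hkey : ∀ a ∈ β, hatE n ν ≤ ∫ x, Real.log (Metric.infDist x ↑(β.erase a)) ∂ν := by
    intro a ha
    have hecard : (β.erase a).card = n := by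
      rw [Finset.card_erase_of_mem ha, hβcard]; omega
    have hene : (β.erase a).Nonempty := Finset.card_pos.mp (by omega)
    have h1 : geErr n ν ≤ Real.exp (∫ x, Real.log (Metric.infDist x ↑(β.erase a)) ∂ν) :=
      csInf_le (geErr_bddBelow ν n) ⟨β.erase a, ⟨hene, by omega⟩, rfl⟩
    have h2 := Real.log_le_log (geErr_pos hd1 hd2 hball hK hsupp hcK n hn) h1
    rwa [Real.log_exp] at h2
  have heraseint : ∀ a ∈ β, Integrable (fun x => Real.log (Metric.infDist x ↑(β.erase a))) ν := by
    intro a ha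
    refine hint _ (Finset.card_pos.mp ?_)
    rw [Finset.card_erase_of_mem ha, hβcard]; omega
  have hsum1 : ((n:ℝ)+1) * hatE n ν ≤
      ∑ a ∈ β, ∫ x, Real.log (Metric.infDist x ↑(β.erase a)) ∂ν := by
    have h := Finset.sum_le_sum hkey
    rwa [Finset.sum_const, hβcard, nsmul_eq_mul, Nat.cast_add, Nat.cast_one] at h
  have hsum2 : ∑ a ∈ β, ∫ x, Real.log (Metric.infDist x ↑(β.erase a)) ∂ν
      = ∫ x, ∑ a ∈ β, Real.log (Metric.infDist x ↑(β.erase a)) ∂ν :=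
    (integral_finset_sum β (fun a ha => heraseint a ha)).symm
  -- pointwise bound
  have hptw : ∀ᵐ x ∂ν, ∑ a ∈ β, Real.log (Metric.infDist x ↑(β.erase a)) ≤
      ((n:ℝ)+1) * Real.log (Metric.infDist x ↑β) +
        (Real.log (3*D) + max 0 (-Real.log (Metric.infDist x ↑β))) := by
    filter_upwards [hKae, hβnotmem] with x hx hxβ
    obtain ⟨a0, ha0β', hmin⟩ := (β.finite_toSet.isCompact).exists_infDist_eq_dist
      (by exact_mod_cast hβne.to_set) x
    have ha0β : a0 ∈ β := by exact_mod_cast ha0β'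
    have hposβ : 0 < Metric.infDist x ↑β :=
      (β.finite_toSet.isClosed.notMem_iff_infDist_pos
        (by exact_mod_cast hβne.to_set)).mp hxβ
    have heq : ∀ a ∈ β, a ≠ a0 →
        Real.log (Metric.infDist x ↑(β.erase a)) = Real.log (Metric.infDist x ↑β) := by
      intro a ha hne
      have h1 : Metric.infDist x ↑(β.erase a) ≤ Metric.infDist x ↑β := by
        rw [hmin]
        exact Metric.infDist_le_dist_of_mem
          (by exact_mod_cast Finset.mem_erase.mpr ⟨fun h => hne h.symm, ha0β⟩)
      have hene : (β.erase a).Nonempty :=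
        ⟨a0, Finset.mem_erase.mpr ⟨fun h => hne h.symm, ha0β⟩⟩
      have h2 : Metric.infDist x ↑β ≤ Metric.infDist x ↑(β.erase a) :=
        Metric.infDist_le_infDist_of_subset (by exact_mod_cast Finset.erase_subset a β)
          (by exact_mod_cast hene.to_set)
      rw [le_antisymm h1 h2]
    have hsplit : ∑ a ∈ β, Real.log (Metric.infDist x ↑(β.erase a)) =
        ∑ a ∈ β.erase a0, Real.log (Metric.infDist x ↑(β.erase a)) +
          Real.log (Metric.infDist x ↑(β.erase a0)) :=
      (Finset.sum_erase_add β _ ha0β).symm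
    have hconst : ∑ a ∈ β.erase a0, Real.log (Metric.infDist x ↑(β.erase a)) =
        (n:ℝ) * Real.log (Metric.infDist x ↑β) := by
      rw [Finset.sum_congr rfl
        (fun a ha => heq a (Finset.mem_of_mem_erase ha) (Finset.ne_of_mem_erase ha)),
        Finset.sum_const, Finset.card_erase_of_mem ha0β, hβcard, nsmul_eq_mul]
      norm_num
    have he0ne : (β.erase a0).Nonempty := Finset.card_pos.mp (by
      rw [Finset.card_erase_of_mem ha0β, hβcard]; omega)
    have hlast : Real.log (Metric.infDist x ↑(β.erase a0)) ≤ Real.log (3*D) := by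
      obtain ⟨b, hb⟩ := id he0ne
      have hbβ : b ∈ β := Finset.mem_of_mem_erase hb
      have h1 : Metric.infDist x ↑(β.erase a0) ≤ dist x b :=
        Metric.infDist_le_dist_of_mem (by exact_mod_cast hb)
      have h2 : dist x b ≤ 3*D := h3D x hx b (hβG (by exact_mod_cast hbβ))
      have hpos2 : 0 < Metric.infDist x ↑(β.erase a0) := by
        refine ((β.erase a0).finite_toSet.isClosed.notMem_iff_infDist_pos
          (by exact_mod_cast he0ne.to_set)).mp ?_
        intro hmem
        refine hxβ ?_
        have : (↑(β.erase a0) : Set E) ⊆ ↑β := by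
          exact_mod_cast Finset.erase_subset a0 β
        exact this hmem
      exact Real.log_le_log hpos2 (h1.trans h2)
    have hLmax : 0 ≤ Real.log (Metric.infDist x ↑β) +
        max 0 (-Real.log (Metric.infDist x ↑β)) := by
      have := le_max_right (0:ℝ) (-Real.log (Metric.infDist x ↑β))
      linarith
    rw [hsplit, hconst]
    linarith
  -- integrate the pointwise bound
  have hup : ∫ x, ∑ a ∈ β, Real.log (Metric.infDist x ↑(β.erase a)) ∂ν ≤
      ((n:ℝ)+1) * (∫ x, Real.log (Metric.infDist x ↑β) ∂ν) +
        (Real.log (3*D) + ∫ x, max 0 (-Real.log (Metric.infDist x ↑β)) ∂ν) := by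
    have hi1 : Integrable (fun x => ((n:ℝ)+1) * Real.log (Metric.infDist x ↑β)) ν :=
      (hint β hβne).const_mul _
    have hi3 : Integrable (fun x => max 0 (-Real.log (Metric.infDist x ↑β))) ν :=
      hFint β hβne
    have hic : Integrable (fun _ : E => Real.log (3*D)) ν := integrable_const _
    have hi2 : Integrable (fun x => Real.log (3*D) +
        max 0 (-Real.log (Metric.infDist x ↑β))) ν := hic.add hi3
    have hRint : Integrable (fun x => ((n:ℝ)+1) * Real.log (Metric.infDist x ↑β) +
        (Real.log (3*D) + max 0 (-Real.log (Metric.infDist x ↑β)))) ν := hi1.add hi2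
    have h := integral_mono_ae (integrable_finset_sum β (fun a ha => heraseint a ha))
      hRint hptw
    rwa [integral_add hi1 hi2, integral_add hic hi3, integral_const_mul, integral_const,
      probReal_univ, one_smul] at h
  -- Hölder-type bound on the positive part integral
  have hFbd : ∫ x, max 0 (-Real.log (Metric.infDist x ↑β)) ∂ν ≤
      (((n:ℝ)+1) * d1) ^ (1/q') * q' / d2 := by
    have h := F_B2' ν hd1 hd2 hball β hβne hq'
    have hc : ((β.card : ℝ)) = (n:ℝ)+1 := by rw [hβcard]; push_cast; ring
    rwa [hc] at h
  set I : ℝ := ∫ x, max 0 (-Real.log (Metric.infDist x ↑β)) ∂ν with hI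
  set J : ℝ := ∫ x, Real.log (Metric.infDist x ↑β) ∂ν with hJdef
  have hmain : ((n:ℝ)+1) * hatE n ν ≤ ((n:ℝ)+1) * J + (Real.log (3*D) + I) := by
    have hcomb := hsum2 ▸ hsum1
    linarith
  have harith : ((n:ℝ)+1)⁻¹ * ((((n:ℝ)+1) * d1) ^ (1/q') * q' / d2) =
      d1 ^ (1/q') * q' * d2⁻¹ * ((n:ℝ)+1) ^ (-(1/p)) := by
    rw [Real.mul_rpow hnp.le hd1.le, show -(1/p) = 1/q' - 1 by linarith,
      Real.rpow_sub hnp, Real.rpow_one]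
    field_simp
  have hfinal : hatE n ν ≤ (hatE (n+1) ν + δ) + ((n:ℝ)+1)⁻¹ * (Real.log (3*D) + I) := by
    have h1 : ((n:ℝ)+1) * hatE n ν ≤
        ((n:ℝ)+1) * (hatE (n+1) ν + δ) + (Real.log (3*D) + I) := by
      nlinarith [hmain, hβint, hnp]
    calc hatE n ν = ((n:ℝ)+1)⁻¹ * (((n:ℝ)+1) * hatE n ν) := by field_simp
      _ ≤ ((n:ℝ)+1)⁻¹ * (((n:ℝ)+1) * (hatE (n+1) ν + δ) + (Real.log (3*D) + I)) :=
          mul_le_mul_of_nonneg_left h1 (inv_nonneg.mpr hnp.le)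
      _ = (hatE (n+1) ν + δ) + ((n:ℝ)+1)⁻¹ * (Real.log (3*D) + I) := by
          field_simp
  have hIb : ((n:ℝ)+1)⁻¹ * I ≤ d1 ^ (1/q') * q' * d2⁻¹ * ((n:ℝ)+1) ^ (-(1/p)) := by
    rw [← harith]
    exact mul_le_mul_of_nonneg_left hFbd (inv_nonneg.mpr hnp.le)
  have hgoal : hatE n ν - hatE (n+1) ν ≤
      (((n:ℝ)+1)⁻¹ * Real.log (3*D) +
        d1 ^ (1/q') * q' * d2⁻¹ * ((n:ℝ)+1) ^ (-(1/p))) + δ := by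
    have hexp : ((n:ℝ)+1)⁻¹ * (Real.log (3*D) + I) =
        ((n:ℝ)+1)⁻¹ * Real.log (3*D) + ((n:ℝ)+1)⁻¹ * I := by ring
    linarith [hfinal, hIb, hexp ▸ hfinal]
  exact hgoal

end
end

section
/- Let ν_1, ..., ν_N be Borel probability measures on ℝ^q with compact support, each satisfying a uniform Hölder ball bound and with quantization dimension of order zero D_0(ν_i) = t_i > 0, and let (q_i) be a positive probability vector. Set ν := Σ_{i=1}^N q_i ν_i and ê_n(μ) := log of the n-th geometric mean quantization error of μ. Then ê_n(ν) ≥ Σ_i q_i ê_n(ν_i) and ê_n(ν) ≤ Σ_i q_i ê_{⌊n/N⌋}(ν_i) for n ≥ 2N, and consequently D_0(ν) = t_0 where 1/t_0 = Σ_{i=1}^N q_i / t_i. -/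
open MeasureTheory Filter

namespace StmtAux

variable {E : Type*} [NormedAddCommGroup E] [MeasurableSpace E] [BorelSpace E]

lemma meas_logInf (α : Finset E) :
    Measurable fun x : E => Real.log (Metric.infDist x ↑α) := by
  have h : Continuous fun x : E => Metric.infDist x (↑α : Set E) :=
    Metric.continuous_infDist_pt (↑α : Set E)
  exact h.measurable.log

lemma nonempty_of_prob (μ : Measure E) [IsProbabilityMeasure μ] : Nonempty E := by
  by_contra h
  rw [not_nonempty_iff] at h
  have h1 : μ Set.univ = 1 := measure_univ
  rw [Set.univ_eq_empty_iff.2 h, measure_empty] at h1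
  exact zero_ne_one h1

lemma expInt_integrableOn (c : ℝ) {d2 : ℝ} (hd2 : 0 < d2) :
    IntegrableOn (fun s : ℝ => c * Real.exp (-(d2 * s))) (Set.Ioi 0) := by
  have h := (exp_neg_integrableOn_Ioi 0 hd2).const_mul c
  exact IntegrableOn.congr_fun h (fun s _ => by simp only [neg_mul]) measurableSet_Ioi

noncomputable def Bnd (c d2 : ℝ) : ℝ := ∫ s in Set.Ioi (0:ℝ), c * Real.exp (-(d2 * s))

lemma Bnd_nonneg {c d2 : ℝ} (hc : 0 ≤ c) : 0 ≤ Bnd c d2 :=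
  setIntegral_nonneg measurableSet_Ioi fun s _ =>
    mul_nonneg hc (Real.exp_pos _).le

lemma Bnd_mono {c c' d2 : ℝ} (h : c ≤ c') (hd2 : 0 < d2) : Bnd c d2 ≤ Bnd c' d2 :=
  setIntegral_mono_on (expInt_integrableOn c hd2) (expInt_integrableOn c' hd2)
    measurableSet_Ioi fun s _ => mul_le_mul_of_nonneg_right h (Real.exp_pos _).le

lemma tail_bound {μ : Measure E} [IsFiniteMeasure μ] {d1 d2 : ℝ}
    (hball : ∀ (x : E) (ε : ℝ), 0 < ε → (μ (Metric.closedBall x ε)).toReal ≤ d1 * ε ^ d2)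
    (α : Finset E) (hα : α.Nonempty) {s : ℝ} (hs : 0 < s) :
    μ {x : E | s < max (-(Real.log (Metric.infDist x ↑α))) 0}
      ≤ ENNReal.ofReal ((α.card * d1) * Real.exp (-(d2 * s))) := by
  have hsub : {x : E | s < max (-(Real.log (Metric.infDist x ↑α))) 0}
      ⊆ ⋃ a ∈ α, Metric.closedBall a (Real.exp (-s)) := by
    intro x hx
    simp only [Set.mem_setOf_eq, lt_max_iff] at hx
    rcases hx with hx | hx
    · have hd0 : 0 < Metric.infDist x ↑α := by
        rcases eq_or_lt_of_le (Metric.infDist_nonneg (x := x) (s := (↑α : Set E))) with h | h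
        · exfalso; rw [← h, Real.log_zero] at hx; simp at hx; linarith
        · exact h
      have hd : Metric.infDist x ↑α < Real.exp (-s) := by
        have := Real.exp_lt_exp.2 (show Real.log (Metric.infDist x ↑α) < -s by linarith)
        rwa [Real.exp_log hd0] at this
      obtain ⟨a, ha, hdist⟩ := (Metric.infDist_lt_iff (by exact_mod_cast hα.to_set)).1 hd
      exact Set.mem_biUnion ha (Metric.mem_closedBall.2 hdist.le)
    · linarith
  calc μ {x : E | s < max (-(Real.log (Metric.infDist x ↑α))) 0}
      ≤ μ (⋃ a ∈ α, Metric.closedBall a (Real.exp (-s))) := measure_mono hsub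
    _ ≤ ∑ a ∈ α, μ (Metric.closedBall a (Real.exp (-s))) := measure_biUnion_finset_le α _
    _ ≤ ∑ _a ∈ α, ENNReal.ofReal (d1 * Real.exp (-(d2 * s))) := by
        refine Finset.sum_le_sum fun a _ => ?_
        have h1 : μ (Metric.closedBall a (Real.exp (-s)))
            = ENNReal.ofReal ((μ (Metric.closedBall a (Real.exp (-s)))).toReal) :=
          (ENNReal.ofReal_toReal (measure_ne_top _ _)).symm
        rw [h1]
        apply ENNReal.ofReal_le_ofReal
        have h2 := hball a (Real.exp (-s)) (Real.exp_pos _)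
        have h3 : Real.exp (-s) ^ d2 = Real.exp (-(d2 * s)) := by
          rw [Real.rpow_def_of_pos (Real.exp_pos _), Real.log_exp]
          ring_nf
        rw [h3] at h2; exact h2
    _ = ENNReal.ofReal ((α.card * d1) * Real.exp (-(d2 * s))) := by
        rw [Finset.sum_const, nsmul_eq_mul, mul_assoc,
          ← ENNReal.ofReal_natCast α.card,
          ← ENNReal.ofReal_mul (by positivity)]

lemma lint_negpart_le {μ : Measure E} [IsProbabilityMeasure μ] {d1 d2 : ℝ}
    (hd1 : 0 < d1) (hd2 : 0 < d2)
    (hball : ∀ (x : E) (ε : ℝ), 0 < ε → (μ (Metric.closedBall x ε)).toReal ≤ d1 * ε ^ d2)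
    (α : Finset E) (hα : α.Nonempty) :
    ∫⁻ x, ENNReal.ofReal (max (-(Real.log (Metric.infDist x ↑α))) 0) ∂μ
      ≤ ENNReal.ofReal (Bnd (α.card * d1) d2) := by
  have hmble : AEMeasurable (fun x : E => max (-(Real.log (Metric.infDist x ↑α))) 0) μ :=
    ((meas_logInf α).neg.max measurable_const).aemeasurable
  rw [lintegral_eq_lintegral_meas_lt
    (f := fun x : E => max (-(Real.log (Metric.infDist x ↑α))) 0) μ
    (Filter.Eventually.of_forall fun x => le_max_right _ _) hmble]
  have hInt : IntegrableOn (fun s : ℝ => (α.card * d1) * Real.exp (-(d2 * s))) (Set.Ioi 0) :=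
    expInt_integrableOn _ hd2
  have heq : ENNReal.ofReal (Bnd (α.card * d1) d2)
      = ∫⁻ s in Set.Ioi (0:ℝ), ENNReal.ofReal ((α.card * d1) * Real.exp (-(d2 * s))) :=
    ofReal_integral_eq_lintegral_ofReal hInt
      (Filter.Eventually.of_forall fun s => by positivity)
  rw [heq]
  refine setLIntegral_mono (by fun_prop) fun s hs => ?_
  exact tail_bound hball α hα hs

lemma integrable_logInf {μ : Measure E} [IsProbabilityMeasure μ] {K : Set E}
    (hK : IsCompact K) (hsupp : μ Kᶜ = 0) {d1 d2 : ℝ} (hd1 : 0 < d1) (hd2 : 0 < d2)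
    (hball : ∀ (x : E) (ε : ℝ), 0 < ε → (μ (Metric.closedBall x ε)).toReal ≤ d1 * ε ^ d2)
    (α : Finset E) (hα : α.Nonempty) :
    Integrable (fun x : E => Real.log (Metric.infDist x ↑α)) μ := by
  obtain ⟨a0, ha0⟩ := hα
  obtain ⟨R, hR⟩ := hK.isBounded.subset_closedBall a0
  set C : ℝ := max (Real.log (max R 1)) 0 with hC
  have hC0 : 0 ≤ C := le_max_right _ _
  have haeK : ∀ᵐ x ∂μ, x ∈ K := by
    rw [ae_iff]
    have : {x : E | ¬ x ∈ K} = Kᶜ := rfl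
    rw [this]; exact hsupp
  have hbound : ∀ᵐ x ∂μ, |Real.log (Metric.infDist x ↑α)|
      ≤ C + max (-(Real.log (Metric.infDist x ↑α))) 0 := by
    filter_upwards [haeK] with x hx
    have hd : Metric.infDist x ↑α ≤ max R 1 := by
      have h1 : Metric.infDist x ↑α ≤ dist x a0 :=
        Metric.infDist_le_dist_of_mem (by exact_mod_cast ha0)
      have h2 : dist x a0 ≤ R := Metric.mem_closedBall.1 (hR hx)
      exact h1.trans (h2.trans (le_max_left _ _))
    have hup : Real.log (Metric.infDist x ↑α) ≤ C := by
      rcases eq_or_lt_of_le (Metric.infDist_nonneg (x := x) (s := (↑α : Set E))) with h | h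
      · rw [← h, Real.log_zero]; exact hC0
      · exact le_trans (Real.log_le_log h hd) (le_max_left _ _)
    rw [abs_le]
    constructor
    · have := le_max_left (-(Real.log (Metric.infDist x ↑α))) 0
      linarith
    · have := le_max_right (-(Real.log (Metric.infDist x ↑α))) 0
      linarith
  refine ⟨(meas_logInf α).aestronglyMeasurable, ?_⟩
  rw [hasFiniteIntegral_iff_norm]
  calc ∫⁻ x, ENNReal.ofReal ‖Real.log (Metric.infDist x ↑α)‖ ∂μ
      ≤ ∫⁻ x, ENNReal.ofReal (C + max (-(Real.log (Metric.infDist x ↑α))) 0) ∂μ := by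
        refine lintegral_mono_ae ?_
        filter_upwards [hbound] with x hx
        exact ENNReal.ofReal_le_ofReal (by rwa [Real.norm_eq_abs])
    _ ≤ ∫⁻ x, (ENNReal.ofReal C
          + ENNReal.ofReal (max (-(Real.log (Metric.infDist x ↑α))) 0)) ∂μ :=
        lintegral_mono fun x => ENNReal.ofReal_add_le
    _ = ENNReal.ofReal C
          + ∫⁻ x, ENNReal.ofReal (max (-(Real.log (Metric.infDist x ↑α))) 0) ∂μ := by
        rw [lintegral_add_left measurable_const]
        simp
    _ < ⊤ := by
        have h1 := lint_negpart_le hd1 hd2 hball α ⟨a0, ha0⟩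
        exact ENNReal.add_lt_top.2 ⟨ENNReal.ofReal_lt_top,
          lt_of_le_of_lt h1 ENNReal.ofReal_lt_top⟩

lemma integral_logInf_ge {μ : Measure E} [IsProbabilityMeasure μ] {d1 d2 : ℝ}
    (hd1 : 0 < d1) (hd2 : 0 < d2)
    (hball : ∀ (x : E) (ε : ℝ), 0 < ε → (μ (Metric.closedBall x ε)).toReal ≤ d1 * ε ^ d2)
    {n : ℕ} (α : Finset E) (hα : α.Nonempty) (hcard : α.card ≤ n) :
    -(Bnd (n * d1) d2) ≤ ∫ x, Real.log (Metric.infDist x ↑α) ∂μ := by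
  have hBnd0 : 0 ≤ Bnd (n * d1) d2 := Bnd_nonneg (by positivity)
  by_cases hint : Integrable (fun x : E => Real.log (Metric.infDist x ↑α)) μ
  · have hnp : Integrable (fun x : E => max (-(Real.log (Metric.infDist x ↑α))) 0) μ :=
      hint.neg.pos_part
    have h1 : ∫ x, max (-(Real.log (Metric.infDist x ↑α))) 0 ∂μ ≤ Bnd (n * d1) d2 := by
      rw [integral_eq_lintegral_of_nonneg_ae
        (f := fun x : E => max (-(Real.log (Metric.infDist x ↑α))) 0)
        (Filter.Eventually.of_forall fun x => le_max_right _ _) hnp.aestronglyMeasurable]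
      have h2 := lint_negpart_le hd1 hd2 hball α hα
      have h3 : Bnd (α.card * d1) d2 ≤ Bnd (n * d1) d2 :=
        Bnd_mono (mul_le_mul_of_nonneg_right (by exact_mod_cast hcard) hd1.le) hd2
      calc (∫⁻ x, ENNReal.ofReal (max (-(Real.log (Metric.infDist x ↑α))) 0) ∂μ).toReal
          ≤ (ENNReal.ofReal (Bnd (α.card * d1) d2)).toReal :=
            ENNReal.toReal_mono ENNReal.ofReal_ne_top h2
        _ = Bnd (α.card * d1) d2 := ENNReal.toReal_ofReal (Bnd_nonneg (by positivity))
        _ ≤ Bnd (n * d1) d2 := h3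
    have h4 : ∫ x, -(max (-(Real.log (Metric.infDist x ↑α))) 0) ∂μ
        ≤ ∫ x, Real.log (Metric.infDist x ↑α) ∂μ := by
      refine integral_mono hnp.neg hint fun x => ?_
      simp only [neg_le]
      linarith [le_max_left (-(Real.log (Metric.infDist x ↑α))) 0]
    rw [integral_neg] at h4
    linarith
  · rw [integral_undef hint]
    linarith

def ISet (n : ℕ) (μ : Measure E) : Set ℝ :=
  (fun α : Finset E => ∫ x, Real.log (Metric.infDist x ↑α) ∂μ) ''
    {α : Finset E | α.Nonempty ∧ α.card ≤ n}

lemma ISet_nonempty (hE : Nonempty E) {n : ℕ} (hn : 1 ≤ n) (μ : Measure E) :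
    (ISet n μ).Nonempty := by
  obtain ⟨x0⟩ := hE
  exact ⟨_, ⟨{x0}, ⟨Finset.singleton_nonempty x0, by simpa using hn⟩, rfl⟩⟩

lemma ISet_bddBelow {μ : Measure E} [IsProbabilityMeasure μ] {d1 d2 : ℝ}
    (hd1 : 0 < d1) (hd2 : 0 < d2)
    (hball : ∀ (x : E) (ε : ℝ), 0 < ε → (μ (Metric.closedBall x ε)).toReal ≤ d1 * ε ^ d2)
    (n : ℕ) : BddBelow (ISet n μ) := by
  refine ⟨-(Bnd (n * d1) d2), ?_⟩
  rintro b ⟨α, ⟨hαne, hαcard⟩, rfl⟩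
  exact integral_logInf_ge hd1 hd2 hball α hαne hαcard

lemma hatE_eq {μ : Measure E} [IsProbabilityMeasure μ] {d1 d2 : ℝ}
    (hd1 : 0 < d1) (hd2 : 0 < d2)
    (hball : ∀ (x : E) (ε : ℝ), 0 < ε → (μ (Metric.closedBall x ε)).toReal ≤ d1 * ε ^ d2)
    {n : ℕ} (hn : 1 ≤ n) : hatE n μ = sInf (ISet n μ) := by
  have hne := ISet_nonempty (nonempty_of_prob μ) hn μ
  have hbdd := ISet_bddBelow hd1 hd2 hball n
  have hmap : Real.exp (sInf (ISet n μ)) = sInf (Real.exp '' ISet n μ) :=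
    Monotone.map_csInf_of_continuousAt (Real.continuous_exp.continuousAt)
      Real.exp_monotone hne hbdd
  have himg : ((fun α : Finset E => Real.exp (∫ x, Real.log (Metric.infDist x ↑α) ∂μ)) ''
      {α : Finset E | α.Nonempty ∧ α.card ≤ n}) = Real.exp '' ISet n μ := by
    rw [ISet, ← Set.image_comp]
    rfl
  rw [hatE, geErr, himg, ← hmap, Real.log_exp]

end StmtAux

open StmtAux

theorem stmt12 {E : Type*} [NormedAddCommGroup E] [NormedSpace ℝ E]
    [FiniteDimensional ℝ E] [MeasurableSpace E] [BorelSpace E]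
    {N : ℕ} (hN : 0 < N) (ν : Fin N → Measure E) [∀ i, IsProbabilityMeasure (ν i)]
    (K : Fin N → Set E) (hK : ∀ i, IsCompact (K i)) (hsupp : ∀ i, ν i (K i)ᶜ = 0)
    (d1 d2 : ℝ) (hd1 : 0 < d1) (hd2 : 0 < d2)
    (hball : ∀ i, ∀ (x : E) (ε : ℝ), 0 < ε →
      (ν i (Metric.closedBall x ε)).toReal ≤ d1 * ε ^ d2)
    (t : Fin N → ℝ) (ht : ∀ i, 0 < t i)
    (hD0 : ∀ i, Tendsto (fun n : ℕ => Real.log n / (-(hatE n (ν i)))) atTop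
      (nhds (t i)))
    (q : Fin N → ℝ) (hq : ∀ i, 0 < q i) (hq1 : ∑ i, q i = 1)
    (νmix : Measure E) (hmix : νmix = ∑ i, ENNReal.ofReal (q i) • ν i)
    (t0 : ℝ) (ht0 : t0 = (∑ i, q i / t i)⁻¹) :
    (∀ n : ℕ, 1 ≤ n → ∑ i, q i * hatE n (ν i) ≤ hatE n νmix) ∧
    (∀ n : ℕ, 2 * N ≤ n → hatE n νmix ≤ ∑ i, q i * hatE (n / N) (ν i)) ∧
    Tendsto (fun n : ℕ => Real.log n / (-(hatE n νmix))) atTop (nhds t0) := by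
  classical
  have hEnon : Nonempty E := nonempty_of_prob (ν ⟨0, hN⟩)
  have hq0 : ∀ i, (0:ℝ) ≤ q i := fun i => (hq i).le
  have hprob : IsProbabilityMeasure νmix := by
    constructor
    rw [hmix, Measure.finset_sum_apply]
    simp only [Measure.smul_apply, smul_eq_mul, measure_univ, mul_one]
    rw [← ENNReal.ofReal_sum_of_nonneg (fun i _ => hq0 i), hq1, ENNReal.ofReal_one]
  have hball_mix : ∀ (x : E) (ε : ℝ), 0 < ε →
      (νmix (Metric.closedBall x ε)).toReal ≤ d1 * ε ^ d2 := by
    intro x ε hε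
    rw [hmix, Measure.finset_sum_apply,
      ENNReal.toReal_sum (fun i _ => by
        rw [Measure.smul_apply, smul_eq_mul]
        exact ENNReal.mul_ne_top ENNReal.ofReal_ne_top (measure_ne_top _ _))]
    calc ∑ i, ((ENNReal.ofReal (q i) • ν i) (Metric.closedBall x ε)).toReal
        = ∑ i, q i * ((ν i) (Metric.closedBall x ε)).toReal := by
          refine Finset.sum_congr rfl fun i _ => ?_
          rw [Measure.smul_apply, smul_eq_mul, ENNReal.toReal_mul,
            ENNReal.toReal_ofReal (hq0 i)]
      _ ≤ ∑ i, q i * (d1 * ε ^ d2) := Finset.sum_le_sum fun i _ =>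
          mul_le_mul_of_nonneg_left (hball i x ε hε) (hq0 i)
      _ = d1 * ε ^ d2 := by rw [← Finset.sum_mul, hq1, one_mul]
  have hint : ∀ (i : Fin N) (α : Finset E), α.Nonempty →
      Integrable (fun x : E => Real.log (Metric.infDist x ↑α)) (ν i) :=
    fun i α hα => integrable_logInf (hK i) (hsupp i) hd1 hd2 (hball i) α hα
  have hintmix : ∀ (α : Finset E), α.Nonempty →
      Integrable (fun x : E => Real.log (Metric.infDist x ↑α)) νmix := by
    intro α hα
    rw [hmix]
    exact integrable_finset_sum_measure.2 fun i _ =>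
      (hint i α hα).smul_measure ENNReal.ofReal_ne_top
  have hsplit : ∀ (α : Finset E), α.Nonempty →
      ∫ x, Real.log (Metric.infDist x ↑α) ∂νmix
        = ∑ i, q i * ∫ x, Real.log (Metric.infDist x ↑α) ∂(ν i) := by
    intro α hα
    rw [hmix, integral_finset_sum_measure (fun i _ =>
      (hint i α hα).smul_measure ENNReal.ofReal_ne_top)]
    refine Finset.sum_congr rfl fun i _ => ?_
    rw [integral_smul_measure, ENNReal.toReal_ofReal (hq0 i), smul_eq_mul]
  have hhat_i : ∀ (i : Fin N) {n : ℕ}, 1 ≤ n → hatE n (ν i) = sInf (ISet n (ν i)) :=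
    fun i {n} hn => hatE_eq hd1 hd2 (hball i) hn
  have hhat_mix : ∀ {n : ℕ}, 1 ≤ n → hatE n νmix = sInf (ISet n νmix) :=
    fun {n} hn => hatE_eq hd1 hd2 hball_mix hn
  have part1 : ∀ n : ℕ, 1 ≤ n → ∑ i, q i * hatE n (ν i) ≤ hatE n νmix := by
    intro n hn
    rw [hhat_mix hn]
    refine le_csInf (ISet_nonempty hEnon hn νmix) ?_
    rintro b ⟨α, ⟨hαne, hαcard⟩, rfl⟩
    dsimp only
    rw [hsplit α hαne]
    refine Finset.sum_le_sum fun i _ => mul_le_mul_of_nonneg_left ?_ (hq0 i)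
    rw [hhat_i i hn]
    exact csInf_le (ISet_bddBelow hd1 hd2 (hball i) n) ⟨α, ⟨hαne, hαcard⟩, rfl⟩
  have hatoms : ∀ i, NoAtoms (ν i) := by
    intro i
    constructor
    intro x
    have h1 : ∀ c : ℝ, 0 < c → ((ν i) {x}).toReal ≤ c := by
      intro c hc
      have hε : 0 < (c / d1) ^ d2⁻¹ := Real.rpow_pos_of_pos (div_pos hc hd1) _
      have h2 : ((ν i) {x}).toReal ≤ d1 * ((c / d1) ^ d2⁻¹) ^ d2 := by
        refine le_trans ?_ (hball i x _ hε)
        exact ENNReal.toReal_mono (measure_ne_top _ _)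
          (measure_mono (Set.singleton_subset_iff.2 (Metric.mem_closedBall_self hε.le)))
      rwa [Real.rpow_inv_rpow (div_pos hc hd1).le (ne_of_gt hd2),
        mul_div_cancel₀ c (ne_of_gt hd1)] at h2
    have h3 : ((ν i) {x}).toReal ≤ 0 :=
      le_of_forall_pos_le_add fun c hc => by simpa using h1 c hc
    have h4 : ((ν i) {x}).toReal = 0 := le_antisymm h3 ENNReal.toReal_nonneg
    exact ((ENNReal.toReal_eq_zero_iff _).1 h4).resolve_right (measure_ne_top _ _)
  have part2 : ∀ n : ℕ, 2 * N ≤ n → hatE n νmix ≤ ∑ i, q i * hatE (n / N) (ν i) := by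
    intro n hn
    have hn1 : 1 ≤ n := le_trans (by omega) hn
    have hm1 : 1 ≤ n / N := (Nat.one_le_div_iff hN).2 (by omega)
    refine le_of_forall_pos_le_add fun ε hε => ?_
    have choice : ∀ i : Fin N, ∃ αi : Finset E, αi.Nonempty ∧ αi.card ≤ n / N ∧
        ∫ x, Real.log (Metric.infDist x ↑αi) ∂(ν i) < hatE (n / N) (ν i) + ε := by
      intro i
      have hlt : sInf (ISet (n / N) (ν i)) < sInf (ISet (n / N) (ν i)) + ε :=
        lt_add_of_pos_right _ hε
      obtain ⟨b, ⟨αi, ⟨h1, h2⟩, rfl⟩, hblt⟩ :=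
        exists_lt_of_csInf_lt (ISet_nonempty hEnon hm1 (ν i)) hlt
      exact ⟨αi, h1, h2, by rw [hhat_i i hm1]; exact hblt⟩
    choose αi hαine hαicard hαilt using choice
    set α : Finset E := Finset.univ.biUnion αi with hα
    obtain ⟨a0, ha0⟩ := hαine ⟨0, hN⟩
    have hαne : α.Nonempty := ⟨a0, Finset.mem_biUnion.2 ⟨_, Finset.mem_univ _, ha0⟩⟩
    have hαcard : α.card ≤ n := by
      calc α.card ≤ ∑ i, (αi i).card := Finset.card_biUnion_le
        _ ≤ ∑ _i : Fin N, n / N := Finset.sum_le_sum fun i _ => hαicard i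
        _ = N * (n / N) := by
            rw [Finset.sum_const, smul_eq_mul, Finset.card_univ, Fintype.card_fin]
        _ ≤ n := Nat.mul_div_le n N
    have hsub : ∀ i, (↑(αi i) : Set E) ⊆ (↑α : Set E) := by
      intro i x hx
      exact Finset.mem_coe.2 (Finset.mem_biUnion.2 ⟨i, Finset.mem_univ _, hx⟩)
    have hmono : ∀ i : Fin N, ∫ x, Real.log (Metric.infDist x ↑α) ∂(ν i)
        ≤ ∫ x, Real.log (Metric.infDist x ↑(αi i)) ∂(ν i) := by
      intro i
      haveI : NullSingletonClass (ν i) := hatoms i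
      refine integral_mono_ae (hint i α hαne) (hint i (αi i) (hαine i)) ?_
      have hnull : (ν i) (↑α : Set E) = 0 := (α.countable_toSet).measure_zero _
      filter_upwards [measure_eq_zero_iff_ae_notMem.1 hnull] with x hx
      have hclosed : IsClosed (↑α : Set E) := (α.finite_toSet).isClosed
      have hpos : 0 < Metric.infDist x ↑α :=
        (hclosed.notMem_iff_infDist_pos (by exact_mod_cast hαne.to_set)).1 hx
      exact Real.log_le_log hpos
        (Metric.infDist_le_infDist_of_subset (hsub i) (by exact_mod_cast (hαine i).to_set))
    rw [hhat_mix hn1]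
    calc sInf (ISet n νmix) ≤ ∫ x, Real.log (Metric.infDist x ↑α) ∂νmix :=
          csInf_le (ISet_bddBelow hd1 hd2 hball_mix n) ⟨α, ⟨hαne, hαcard⟩, rfl⟩
      _ = ∑ i, q i * ∫ x, Real.log (Metric.infDist x ↑α) ∂(ν i) := hsplit α hαne
      _ ≤ ∑ i, q i * (hatE (n / N) (ν i) + ε) := Finset.sum_le_sum fun i _ =>
          mul_le_mul_of_nonneg_left (le_trans (hmono i) (hαilt i).le) (hq0 i)
      _ = (∑ i, q i * hatE (n / N) (ν i)) + ε := by
          rw [show (∑ i, q i * (hatE (n / N) (ν i) + ε))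
              = (∑ i, q i * hatE (n / N) (ν i)) + (∑ i, q i) * ε by
            rw [Finset.sum_mul, ← Finset.sum_add_distrib]
            exact Finset.sum_congr rfl fun i _ => by ring]
          rw [hq1, one_mul]
  refine ⟨part1, part2, ?_⟩
  -- Part 3 : the limit
  have hs : (0:ℝ) < ∑ i, q i / t i :=
    Finset.sum_pos (fun i _ => div_pos (hq i) (ht i)) ⟨⟨0, hN⟩, Finset.mem_univ _⟩
  have hA : ∀ i, Tendsto (fun n : ℕ => (-(hatE n (ν i))) / Real.log n) atTop
      (nhds (t i)⁻¹) := by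
    intro i
    have h := (hD0 i).inv₀ (ne_of_gt (ht i))
    refine h.congr fun n => ?_
    rw [inv_div]
  have hlogN : Tendsto (fun n : ℕ => Real.log n) atTop atTop :=
    Real.tendsto_log_atTop.comp tendsto_natCast_atTop_atTop
  have hndiv : Tendsto (fun n : ℕ => n / N) atTop atTop :=
    tendsto_atTop_atTop.2 fun b => ⟨b * N, fun n hn => (Nat.le_div_iff_mul_le hN).2 hn⟩
  have hNR : (0:ℝ) < N := by exact_mod_cast hN
  have hlograt : Tendsto (fun n : ℕ => Real.log ((n / N : ℕ) : ℝ) / Real.log n)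
      atTop (nhds 1) := by
    have hlow : Tendsto (fun n : ℕ => 1 - Real.log (2 * (N:ℝ)) / Real.log n)
        atTop (nhds 1) := by
      have h0 := Tendsto.div_atTop
        (tendsto_const_nhds (x := Real.log (2 * (N:ℝ))) (f := atTop)) hlogN
      have h1 := (tendsto_const_nhds (x := (1:ℝ)) (f := (atTop : Filter ℕ))).sub h0
      simpa using h1
    refine tendsto_of_tendsto_of_tendsto_of_le_of_le' hlow tendsto_const_nhds ?_ ?_
    · filter_upwards [eventually_ge_atTop (2 * N), eventually_ge_atTop 2] with n hn2N hn2
      have hlogn : 0 < Real.log n :=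
        Real.log_pos (by exact_mod_cast Nat.lt_of_lt_of_le Nat.one_lt_two hn2)
      set m : ℕ := n / N with hm
      have hmn : (n:ℝ) < (m:ℝ) * N + N := by
        have h2 : n < N * m + N := by
          calc n = N * m + n % N := (Nat.div_add_mod n N).symm
            _ < N * m + N := Nat.add_lt_add_left (Nat.mod_lt n hN) _
        have := (Nat.cast_lt (α := ℝ)).2 h2
        push_cast at this
        linarith
      have h2N : 2 * (N:ℝ) ≤ n := by exact_mod_cast hn2N
      have hcast : (n:ℝ) / (2 * N) ≤ (m:ℝ) := by
        rw [div_le_iff₀ (by positivity)]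
        nlinarith
      have hpos : 0 < (n:ℝ) / (2 * N) := by positivity
      have hloglb : Real.log n - Real.log (2 * (N:ℝ)) ≤ Real.log (m:ℝ) := by
        have := Real.log_le_log hpos hcast
        rwa [Real.log_div (by positivity) (by positivity)] at this
      have : (Real.log n - Real.log (2 * (N:ℝ))) / Real.log n
          ≤ Real.log (m:ℝ) / Real.log n := by
        exact div_le_div_of_nonneg_right hloglb hlogn.le
      calc 1 - Real.log (2 * (N:ℝ)) / Real.log n
          = (Real.log n - Real.log (2 * (N:ℝ))) / Real.log n := by
            rw [sub_div, div_self (ne_of_gt hlogn)]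
        _ ≤ Real.log ((n / N : ℕ) : ℝ) / Real.log n := this
    · filter_upwards [eventually_ge_atTop 2] with n hn2
      have hlogn : 0 < Real.log n :=
        Real.log_pos (by exact_mod_cast Nat.lt_of_lt_of_le Nat.one_lt_two hn2)
      rw [div_le_one hlogn]
      rcases Nat.eq_zero_or_pos (n / N) with h | h
      · rw [h]; simpa using hlogn.le
      · refine Real.log_le_log (by exact_mod_cast h) ?_
        exact_mod_cast Nat.div_le_self n N
  have hB : ∀ i, Tendsto (fun n : ℕ => (-(hatE (n / N) (ν i))) / Real.log n) atTop
      (nhds (t i)⁻¹) := by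
    intro i
    have h1 : Tendsto (fun n : ℕ => (-(hatE (n / N) (ν i))) / Real.log ((n / N : ℕ) : ℝ))
        atTop (nhds (t i)⁻¹) := (hA i).comp hndiv
    have h2 := h1.mul hlograt
    rw [mul_one] at h2
    refine Tendsto.congr' ?_ h2
    filter_upwards [eventually_ge_atTop (2 * N), eventually_ge_atTop 2] with n hn hn2
    have hm2 : (2:ℕ) ≤ n / N := (Nat.le_div_iff_mul_le hN).2 hn
    have hlogm : Real.log ((n / N : ℕ) : ℝ) ≠ 0 :=
      ne_of_gt (Real.log_pos (by exact_mod_cast Nat.lt_of_lt_of_le Nat.one_lt_two hm2))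
    have hlogn : Real.log n ≠ 0 :=
      ne_of_gt (Real.log_pos (by exact_mod_cast Nat.lt_of_lt_of_le Nat.one_lt_two hn2))
    field_simp
  have hup : Tendsto (fun n : ℕ => ∑ i, q i * ((-(hatE n (ν i))) / Real.log n)) atTop
      (nhds (∑ i, q i / t i)) := by
    have h := tendsto_finset_sum Finset.univ
      (fun (i : Fin N) (_ : i ∈ Finset.univ) => ((hA i).const_mul (q i)))
    simpa [div_eq_mul_inv] using h
  have hlo : Tendsto (fun n : ℕ => ∑ i, q i * ((-(hatE (n / N) (ν i))) / Real.log n)) atTop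
      (nhds (∑ i, q i / t i)) := by
    have h := tendsto_finset_sum Finset.univ
      (fun (i : Fin N) (_ : i ∈ Finset.univ) => ((hB i).const_mul (q i)))
    simpa [div_eq_mul_inv] using h
  have hsq : Tendsto (fun n : ℕ => (-(hatE n νmix)) / Real.log n) atTop
      (nhds (∑ i, q i / t i)) := by
    refine tendsto_of_tendsto_of_tendsto_of_le_of_le' hlo hup ?_ ?_
    · filter_upwards [eventually_ge_atTop (2 * N), eventually_ge_atTop 2] with n hn hn2
      have hlogn : 0 < Real.log n :=
        Real.log_pos (by exact_mod_cast Nat.lt_of_lt_of_le Nat.one_lt_two hn2)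
      have h := part2 n hn
      have hsum : ∑ i, q i * ((-(hatE (n / N) (ν i))) / Real.log n)
          = (-(∑ i, q i * hatE (n / N) (ν i))) / Real.log n := by
        rw [← Finset.sum_neg_distrib, Finset.sum_div]
        exact Finset.sum_congr rfl fun i _ => by ring
      rw [hsum]
      exact div_le_div_of_nonneg_right (neg_le_neg h) hlogn.le
    · filter_upwards [eventually_ge_atTop (2 * N), eventually_ge_atTop 2] with n hn hn2
      have hn1 : 1 ≤ n := by omega
      have hlogn : 0 < Real.log n :=
        Real.log_pos (by exact_mod_cast Nat.lt_of_lt_of_le Nat.one_lt_two hn2)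
      have h := part1 n hn1
      have hsum : ∑ i, q i * ((-(hatE n (ν i))) / Real.log n)
          = (-(∑ i, q i * hatE n (ν i))) / Real.log n := by
        rw [← Finset.sum_neg_distrib, Finset.sum_div]
        exact Finset.sum_congr rfl fun i _ => by ring
      rw [hsum]
      exact div_le_div_of_nonneg_right (neg_le_neg h) hlogn.le
  have hfin := hsq.inv₀ (ne_of_gt hs)
  rw [ht0]
  refine hfin.congr fun n => ?_
  rw [inv_div]
end
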